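/- arXiv:1401.5613 — 3 statements merged into one kernel-verified Lean document; each statement's English description precedes it below -/
import Mathlib

section
/- In the change-point model below, ν-almost everywhere the conditional probability of {θ > n} given the full observation σ-algebra 𝓕_n satisfies ν(θ > n | 𝓕_n) = (1 − π) pⁿ L₀(x, X₁, …, X_n) / S(x, X₁, …, X_n); equivalently, 1 − Π_n = (1 − π) pⁿ L₀ / S where Π_n := ν(θ ≤ n | 𝓕_n). -/
open MeasureTheory Finset
open scoped NNReal ENNReal

noncomputable section

/-- `L_m(x_k, …, x_N) = ∏_{r=k+1}^{N-m} f⁰(x_{r-1}, x_r) · ∏_{r=N-m+1}^{N} f¹(x_{r-1}, x_r)`. -/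
def Lfn {E : Type*} (f0 f1 : E → E → ℝ≥0) (k N m : ℕ) (xv : ℕ → E) : ℝ≥0 :=
  (∏ r ∈ Finset.Icc (k + 1) (N - m), f0 (xv (r - 1)) (xv r)) *
    ∏ r ∈ Finset.Icc (N - m + 1) N, f1 (xv (r - 1)) (xv r)

/-- Density `ℓ_j(x₀,…,x_n)` of the observations given the change point `θ = j`:
`ℓ_j = L_{n-j+1}` if `1 ≤ j ≤ n`, `ℓ₀ = L_n`, `ℓ_j = L₀` for `j > n`. -/
def ellDens {E : Type*} (f0 f1 : E → E → ℝ≥0) (n j : ℕ) (xv : ℕ → E) : ℝ≥0 :=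
  if j = 0 then Lfn f0 f1 0 n n xv
  else if j ≤ n then Lfn f0 f1 0 n (n - j + 1) xv
  else Lfn f0 f1 0 n 0 xv

/-- Extension of the observations `(x₁, …, x_n)` to a full trajectory `(x₀, x₁, …, x_n)`
with `x₀ = x` (entries beyond `n` are irrelevant and set to `x`). -/
def extvec {E : Type*} (n : ℕ) (x : E) (xs : Fin n → E) : ℕ → E := fun r =>
  if h : 1 ≤ r ∧ r ≤ n then xs ⟨r - 1, by omega⟩ else x

/-- The prior distribution of the change point: `ρ 0 = π`, `ρ j = (1-π) p^(j-1) (1-p)`, `j ≥ 1`. -/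
def prior (p π : ℝ) (j : ℕ) : ℝ≥0∞ :=
  if j = 0 then ENNReal.ofReal π else ENNReal.ofReal ((1 - π) * p ^ (j - 1) * (1 - p))

/-- The joint law `ν` of `(θ, X₁, …, X_n)` given `X₀ = x`: its restriction to `{j} × Eⁿ` is
`ρ j` times the measure with density `(x₁,…,x_n) ↦ ℓ_j(x, x₁, …, x_n)` w.r.t. `μ^⊗n`. -/
def nuMeasure {E : Type*} [MeasurableSpace E] (μ : Measure E) (f0 f1 : E → E → ℝ≥0)
    (p π : ℝ) (x : E) (n : ℕ) : Measure (ℕ × (Fin n → E)) :=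
  Measure.sum fun j =>
    prior p π j •
      Measure.map (fun xs => (j, xs))
        ((Measure.pi fun _ : Fin n => μ).withDensity fun xs =>
          (ellDens f0 f1 n j (extvec n x xs) : ℝ≥0∞))

/-- `S(x₀, …, x_m) = π L_m + (1-π)(∑_{i=1}^m p^{i-1} q L_{m-i+1} + p^m L₀)`. -/
def Sfn {E : Type*} (f0 f1 : E → E → ℝ≥0) (p π : ℝ) (m : ℕ) (xv : ℕ → E) : ℝ :=
  π * (Lfn f0 f1 0 m m xv : ℝ) +
    (1 - π) * ((∑ i ∈ Finset.Icc 1 m, p ^ (i - 1) * (1 - p) * (Lfn f0 f1 0 m (m - i + 1) xv : ℝ)) +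
      p ^ m * (Lfn f0 f1 0 m 0 xv : ℝ))

/-- `G_{l+1}(x_k, …, x_{k+l+1}, α) = α L_{l+1} + (1-α)(∑_{i=0}^{l} p^{l-i} q L_{i+1} + p^{l+1} L₀)`. -/
def Gfn {E : Type*} (f0 f1 : E → E → ℝ≥0) (p : ℝ) (k l : ℕ) (xv : ℕ → E) (α : ℝ) : ℝ :=
  α * (Lfn f0 f1 k (k + l + 1) (l + 1) xv : ℝ) +
    (1 - α) *
      ((∑ i ∈ Finset.range (l + 1), p ^ (l - i) * (1 - p) * (Lfn f0 f1 k (k + l + 1) (i + 1) xv : ℝ)) +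
        p ^ (l + 1) * (Lfn f0 f1 k (k + l + 1) 0 xv : ℝ))

/-- The σ-algebra `𝓕_m` generated by the observations `(X₁, …, X_m)`, `m ≤ n`. -/
def Ffil {E : Type*} [MeasurableSpace E] (n m : ℕ) (h : m ≤ n) :
    MeasurableSpace (ℕ × (Fin n → E)) :=
  MeasurableSpace.comap (fun ω => fun i : Fin m => ω.2 (Fin.castLE h i)) inferInstance

end

open MeasureTheory

section Aux
set_option linter.unusedSectionVars false
variable {E : Type*} [MeasurableSpace E]

lemma meas_extvec (n : ℕ) (x : E) (k : ℕ) :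
    Measurable fun xs : Fin n → E => extvec n x xs k := by
  unfold extvec
  by_cases h : 1 ≤ k ∧ k ≤ n
  · simpa only [dif_pos h] using measurable_pi_apply _
  · simp only [dif_neg h]; exact measurable_const

lemma extvec_snoc_le {n : ℕ} (x : E) (xs : Fin n → E) (y : E) {r : ℕ} (hr : r ≤ n) :
    extvec (n + 1) x (Fin.snoc xs y) r = extvec n x xs r := by
  unfold extvec
  by_cases h : 1 ≤ r ∧ r ≤ n
  · rw [dif_pos ⟨h.1, by omega⟩, dif_pos h]
    have : (⟨r - 1, by omega⟩ : Fin (n + 1)) = Fin.castSucc ⟨r - 1, by omega⟩ := rfl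
    rw [this, Fin.snoc_castSucc]
  · rw [dif_neg (by omega), dif_neg h]

lemma extvec_snoc_last {n : ℕ} (x : E) (xs : Fin n → E) (y : E) :
    extvec (n + 1) x (Fin.snoc xs y) (n + 1) = y := by
  unfold extvec
  rw [dif_pos ⟨by omega, le_rfl⟩]
  have : (⟨n + 1 - 1, by omega⟩ : Fin (n + 1)) = Fin.last n := by ext; simp
  rw [this, Fin.snoc_last]

/-- Markov chain normalization: the kernel product integrates to 1. -/
lemma lintegral_prodker (μ : Measure E) [SigmaFinite μ]
    (g : ℕ → E → E → ℝ≥0) (hg : ∀ r, Measurable (Function.uncurry (g r)))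
    (hgi : ∀ r z, ∫⁻ y, (g r z y : ℝ≥0∞) ∂μ = 1) :
    ∀ (N : ℕ) (z : E),
      ∫⁻ xs, (∏ r ∈ Finset.Icc 1 N,
          ((g r (extvec N z xs (r - 1)) (extvec N z xs r) : ℝ≥0∞)))
        ∂(Measure.pi fun _ : Fin N => μ) = 1 := by
  intro N
  induction N with
  | zero =>
      intro z
      simp [Finset.Icc_eq_empty (by omega : ¬ (1:ℕ) ≤ 0), Measure.pi_univ]
  | succ N ih =>
      intro z
      set P := Measure.pi fun _ : Fin N => μ with hP
      have hfac : ∀ (n' : ℕ) (z' : E) (r : ℕ), Measurable fun xs : Fin n' → E =>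
          ((g r (extvec n' z' xs (r - 1)) (extvec n' z' xs r) : ℝ≥0∞)) := fun n' z' r =>
        ((hg r).comp ((meas_extvec _ _ _).prodMk (meas_extvec _ _ _))).coe_nnreal_ennreal
      have hmeasF : Measurable fun xs : Fin (N + 1) → E =>
          ∏ r ∈ Finset.Icc 1 (N + 1),
            ((g r (extvec (N+1) z xs (r - 1)) (extvec (N+1) z xs r) : ℝ≥0∞)) :=
        Finset.measurable_prod _ fun r _ => hfac _ _ r
      have hmp := ((measurePreserving_piFinSuccAbove (fun _ : Fin (N+1) => μ)
        (Fin.last N)).symm (MeasurableEquiv.piFinSuccAbove (fun _ => E) (Fin.last N)))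
      rw [← hmp.lintegral_comp hmeasF]
      have hesymm : ∀ w : E × (Fin N → E),
          (MeasurableEquiv.piFinSuccAbove (fun _ => E) (Fin.last N)).symm w
            = Fin.snoc w.2 w.1 := fun w => by
        simp [MeasurableEquiv.piFinSuccAbove, Fin.insertNth_last', Fin.snocEquiv]
      have hsplit : ∀ (y : E) (xs : Fin N → E),
          (∏ r ∈ Finset.Icc 1 (N + 1),
            ((g r (extvec (N+1) z (Fin.snoc xs y) (r - 1))
              (extvec (N+1) z (Fin.snoc xs y) r) : ℝ≥0∞)))
          = (∏ r ∈ Finset.Icc 1 N,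
              ((g r (extvec N z xs (r - 1)) (extvec N z xs r) : ℝ≥0∞)))
            * ((g (N+1) (extvec N z xs N) y : ℝ≥0∞)) := by
        intro y xs
        rw [← Finset.Ico_add_one_right_eq_Icc, Finset.prod_Ico_succ_top (by omega), Finset.Ico_add_one_right_eq_Icc]
        congr 1
        · apply Finset.prod_congr rfl
          intro r hr
          simp only [Finset.mem_Icc] at hr
          rw [extvec_snoc_le _ _ _ (by omega), extvec_snoc_le _ _ _ (by omega)]
        · rw [show N + 1 - 1 = N from rfl, extvec_snoc_le _ _ _ le_rfl, extvec_snoc_last]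
      calc ∫⁻ w : E × (Fin N → E),
              (∏ r ∈ Finset.Icc 1 (N + 1),
                ((g r (extvec (N+1) z ((MeasurableEquiv.piFinSuccAbove
                    (fun _ => E) (Fin.last N)).symm w) (r - 1))
                  (extvec (N+1) z ((MeasurableEquiv.piFinSuccAbove
                    (fun _ => E) (Fin.last N)).symm w) r) : ℝ≥0∞)))
              ∂(μ.prod P)
          = ∫⁻ xs, ∫⁻ y,
              (∏ r ∈ Finset.Icc 1 N,
                ((g r (extvec N z xs (r - 1)) (extvec N z xs r) : ℝ≥0∞)))
                * ((g (N+1) (extvec N z xs N) y : ℝ≥0∞)) ∂μ ∂P := by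
            have hFw : Measurable fun w : E × (Fin N → E) =>
                ∏ r ∈ Finset.Icc 1 (N + 1),
                  ((g r (extvec (N+1) z ((MeasurableEquiv.piFinSuccAbove
                      (fun _ => E) (Fin.last N)).symm w) (r - 1))
                    (extvec (N+1) z ((MeasurableEquiv.piFinSuccAbove
                      (fun _ => E) (Fin.last N)).symm w) r) : ℝ≥0∞)) :=
              hmeasF.comp (MeasurableEquiv.measurable _)
            rw [lintegral_prod_symm' _ hFw]
            congr 1 with xs
            congr 1 with y
            rw [hesymm (y, xs)]
            exact hsplit y xs
        _ = 1 := by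
            have : ∀ xs : Fin N → E, ∫⁻ y,
                (∏ r ∈ Finset.Icc 1 N,
                  ((g r (extvec N z xs (r - 1)) (extvec N z xs r) : ℝ≥0∞)))
                  * ((g (N+1) (extvec N z xs N) y : ℝ≥0∞)) ∂μ
                = ∏ r ∈ Finset.Icc 1 N,
                    ((g r (extvec N z xs (r - 1)) (extvec N z xs r) : ℝ≥0∞)) := by
              intro xs
              have hgy : Measurable fun y : E =>
                  ((g (N+1) (extvec N z xs N) y : ℝ≥0∞)) :=
                ((hg (N+1)).comp (measurable_const.prodMk measurable_id)).coe_nnreal_ennreal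
              rw [lintegral_const_mul _ hgy, hgi (N+1) (extvec N z xs N), mul_one]
            simp_rw [this]
            exact ih z


end Aux

section Aux2
set_option linter.unusedSectionVars false
variable {E : Type*} [MeasurableSpace E] (μ : Measure E) [SigmaFinite μ]
  (f0 f1 : E → E → ℝ≥0) (hf0 : Measurable (Function.uncurry f0))
  (hf1 : Measurable (Function.uncurry f1))

include hf0 hf1

lemma meas_Lfn (k N m n : ℕ) (x : E) :
    Measurable fun xs : Fin n → E => Lfn f0 f1 k N m (extvec n x xs) := by
  unfold Lfn
  apply Measurable.mul <;> apply Finset.measurable_prod <;> intro r _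
  · exact hf0.comp ((meas_extvec _ _ _).prodMk (meas_extvec _ _ _))
  · exact hf1.comp ((meas_extvec _ _ _).prodMk (meas_extvec _ _ _))

lemma meas_ellDens (n j : ℕ) (x : E) :
    Measurable fun xs : Fin n → E => (ellDens f0 f1 n j (extvec n x xs) : ℝ≥0∞) := by
  unfold ellDens
  split_ifs <;> exact (meas_Lfn f0 f1 hf0 hf1 _ _ _ _ x).coe_nnreal_ennreal

omit hf0 hf1 in
/-- coercion of `Lfn 0 n m` as a single product over `Icc 1 n`. -/
lemma Lfn_eq_prodker (n m : ℕ) (hm : m ≤ n) (xv : ℕ → E) :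
    ((Lfn f0 f1 0 n m xv : ℝ≥0∞))
      = ∏ r ∈ Finset.Icc 1 n,
          (((if r ≤ n - m then f0 else f1) (xv (r - 1)) (xv r) : ℝ≥0∞)) := by
  unfold Lfn
  push_cast
  rw [show Finset.Icc (0+1) (n-m) = Finset.Ioc 0 (n-m) from Finset.Icc_add_one_left_eq_Ioc 0 (n-m),
    show Finset.Icc (n-m+1) n = Finset.Ioc (n-m) n from Finset.Icc_add_one_left_eq_Ioc (n-m) n,
    show Finset.Icc 1 n = Finset.Ioc 0 n from Finset.Icc_add_one_left_eq_Ioc 0 n,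
    ← Finset.prod_Ioc_consecutive _ (Nat.zero_le (n - m)) (Nat.sub_le n m)]
  congr 1
  · exact Finset.prod_congr rfl fun r hr => by
      rw [Finset.mem_Ioc] at hr; rw [if_pos hr.2]
  · exact Finset.prod_congr rfl fun r hr => by
      rw [Finset.mem_Ioc] at hr; rw [if_neg (by omega)]

lemma lintegral_Lfn (hi0 : ∀ z, ∫⁻ y, (f0 z y : ℝ≥0∞) ∂μ = 1)
    (hi1 : ∀ z, ∫⁻ y, (f1 z y : ℝ≥0∞) ∂μ = 1) (n m : ℕ) (hm : m ≤ n) (x : E) :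
    ∫⁻ xs, ((Lfn f0 f1 0 n m (extvec n x xs) : ℝ≥0∞))
      ∂(Measure.pi fun _ : Fin n => μ) = 1 := by
  have := lintegral_prodker μ (fun r => if r ≤ n - m then f0 else f1)
    (fun r => by by_cases h : r ≤ n - m
                 · simpa [h] using hf0
                 · simpa [h] using hf1)
    (fun r z => by by_cases h : r ≤ n - m <;> simp [h, hi0, hi1]) n x
  rw [← this]
  congr 1 with xs
  exact Lfn_eq_prodker f0 f1 n m hm _

lemma lintegral_ellDens (hi0 : ∀ z, ∫⁻ y, (f0 z y : ℝ≥0∞) ∂μ = 1)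
    (hi1 : ∀ z, ∫⁻ y, (f1 z y : ℝ≥0∞) ∂μ = 1) (n j : ℕ) (x : E) :
    ∫⁻ xs, ((ellDens f0 f1 n j (extvec n x xs) : ℝ≥0∞))
      ∂(Measure.pi fun _ : Fin n => μ) = 1 := by
  unfold ellDens
  split_ifs with h1 h2
  · exact lintegral_Lfn μ f0 f1 hf0 hf1 hi0 hi1 n n le_rfl x
  · exact lintegral_Lfn μ f0 f1 hf0 hf1 hi0 hi1 n (n - j + 1) (by omega) x
  · exact lintegral_Lfn μ f0 f1 hf0 hf1 hi0 hi1 n 0 (by omega) x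

end Aux2

section Aux3

variable {p π : ℝ} (hp : p ∈ Set.Ioo (0:ℝ) 1) (hπ : π ∈ Set.Ioo (0:ℝ) 1)

include hp hπ

lemma tsum_prior_tail (n : ℕ) :
    ∑' j : ℕ, prior p π (j + (n + 1)) = ENNReal.ofReal ((1 - π) * p ^ n) := by
  obtain ⟨hp0, hp1⟩ := hp
  have h1p : (0:ℝ) ≤ 1 - p := by linarith
  have h1π : (0:ℝ) ≤ 1 - π := by have := hπ.2; linarith
  have hterm : ∀ j : ℕ, prior p π (j + (n + 1))
      = ENNReal.ofReal (((1 - π) * p ^ n * (1 - p)) * p ^ j) := by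
    intro j
    unfold prior
    rw [if_neg (by omega)]
    congr 1
    rw [show j + (n + 1) - 1 = j + n by omega, pow_add]
    ring
  simp_rw [hterm]
  have hnn : ∀ j : ℕ, 0 ≤ ((1 - π) * p ^ n * (1 - p)) * p ^ j := by
    intro j; positivity
  have hsum : Summable fun j : ℕ => ((1 - π) * p ^ n * (1 - p)) * p ^ j :=
    (summable_geometric_of_lt_one hp0.le hp1).mul_left _
  rw [← ENNReal.ofReal_tsum_of_nonneg hnn hsum, tsum_mul_left,
    tsum_geometric_of_lt_one hp0.le hp1]
  congr 1
  rw [mul_assoc ((1 - π) * p ^ n) (1 - p) (1 - p)⁻¹,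
    mul_inv_cancel₀ (by linarith : (1:ℝ) - p ≠ 0), mul_one]

lemma tsum_prior : ∑' j : ℕ, prior p π j = 1 := by
  rw [← Summable.sum_add_tsum_nat_add' (k := 1) ENNReal.summable]
  have h := tsum_prior_tail hp hπ (p := p) (π := π) 0
  simp only [pow_zero, mul_one, zero_add] at h
  rw [h]
  simp only [Finset.range_one, Finset.sum_singleton]
  unfold prior
  rw [if_pos rfl, ← ENNReal.ofReal_add hπ.1.le (by linarith [hπ.2])]
  norm_num

end Aux3

lemma tsum_prior_ellDens {E : Type*} (f0 f1 : E → E → ℝ≥0) {p π : ℝ}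
    (hp : p ∈ Set.Ioo (0:ℝ) 1) (hπ : π ∈ Set.Ioo (0:ℝ) 1) (n : ℕ) (xv : ℕ → E) :
    ∑' j : ℕ, prior p π j * ((ellDens f0 f1 n j xv : ℝ≥0∞))
      = ENNReal.ofReal (Sfn f0 f1 p π n xv) := by
  obtain ⟨hp0, hp1⟩ := hp; obtain ⟨hπ0, hπ1⟩ := hπ
  have h1p : (0:ℝ) ≤ 1 - p := by linarith
  have h1π : (0:ℝ) ≤ 1 - π := by linarith
  have hL : ∀ m, ((Lfn f0 f1 0 n m xv : ℝ≥0∞))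
      = ENNReal.ofReal ((Lfn f0 f1 0 n m xv : ℝ≥0) : ℝ) :=
    fun m => ENNReal.ofReal_coe_nnreal.symm
  rw [← Summable.sum_add_tsum_nat_add' (k := n+1) ENNReal.summable]
  have htail : (∑' j : ℕ, prior p π (j + (n+1)) * ((ellDens f0 f1 n (j + (n+1)) xv : ℝ≥0∞)))
      = ENNReal.ofReal ((1 - π) * p ^ n * ((Lfn f0 f1 0 n 0 xv : ℝ≥0) : ℝ)) := by
    have hell : ∀ j : ℕ, ellDens f0 f1 n (j + (n+1)) xv = Lfn f0 f1 0 n 0 xv := by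
      intro j; unfold ellDens; rw [if_neg (by omega), if_neg (by omega)]
    simp_rw [hell]
    rw [ENNReal.tsum_mul_right, tsum_prior_tail ⟨hp0, hp1⟩ ⟨hπ0, hπ1⟩ n, hL 0,
      ← ENNReal.ofReal_mul (by positivity)]
  have hins : Finset.range (n+1) = insert 0 (Finset.Icc 1 n) := by
    ext a; simp only [Finset.mem_range, Finset.mem_insert, Finset.mem_Icc]; omega
  have hhead : ∑ j ∈ Finset.range (n+1), prior p π j * ((ellDens f0 f1 n j xv : ℝ≥0∞))
      = ENNReal.ofReal (π * ((Lfn f0 f1 0 n n xv : ℝ≥0) : ℝ))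
        + ENNReal.ofReal (∑ j ∈ Finset.Icc 1 n,
            (1 - π) * p ^ (j-1) * (1 - p) * ((Lfn f0 f1 0 n (n - j + 1) xv : ℝ≥0) : ℝ)) := by
    rw [hins, Finset.sum_insert (by simp)]
    congr 1
    · unfold prior ellDens
      rw [if_pos rfl, if_pos rfl, hL n, ← ENNReal.ofReal_mul hπ0.le]
    · rw [ENNReal.ofReal_sum_of_nonneg (fun j _ => by positivity)]
      apply Finset.sum_congr rfl
      intro j hj
      rw [Finset.mem_Icc] at hj
      unfold prior ellDens
      rw [if_neg (by omega), if_neg (by omega), if_pos hj.2, hL,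
        ← ENNReal.ofReal_mul (by positivity)]
  rw [hhead, htail]
  have hA : (0:ℝ) ≤ π * ((Lfn f0 f1 0 n n xv : ℝ≥0) : ℝ) :=
    mul_nonneg hπ0.le (NNReal.coe_nonneg _)
  have hB : (0:ℝ) ≤ ∑ j ∈ Finset.Icc 1 n,
      (1 - π) * p ^ (j-1) * (1 - p) * ((Lfn f0 f1 0 n (n - j + 1) xv : ℝ≥0) : ℝ) :=
    Finset.sum_nonneg fun j _ => by positivity
  have hC : (0:ℝ) ≤ (1 - π) * p ^ n * ((Lfn f0 f1 0 n 0 xv : ℝ≥0) : ℝ) := by positivity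
  rw [← ENNReal.ofReal_add hA hB, ← ENNReal.ofReal_add (add_nonneg hA hB) hC]
  congr 1
  unfold Sfn
  rw [mul_add ((1:ℝ) - π), Finset.mul_sum]
  rw [Finset.sum_congr rfl (fun j (hj : j ∈ Finset.Icc 1 n) =>
    (by ring : (1 - π) * (p ^ (j-1) * (1 - p) * ((Lfn f0 f1 0 n (n - j + 1) xv : ℝ≥0) : ℝ))
      = (1 - π) * p ^ (j-1) * (1 - p) * ((Lfn f0 f1 0 n (n - j + 1) xv : ℝ≥0) : ℝ)))]
  ring

lemma lintegral_nu {E : Type*} [MeasurableSpace E] (μ : Measure E) [SigmaFinite μ]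
    (f0 f1 : E → E → ℝ≥0) (hf0 : Measurable (Function.uncurry f0))
    (hf1 : Measurable (Function.uncurry f1)) (p π : ℝ) (x : E) (n : ℕ)
    (F : ℕ × (Fin n → E) → ℝ≥0∞) (hF : Measurable F) :
    ∫⁻ ω, F ω ∂(nuMeasure μ f0 f1 p π x n)
      = ∑' j : ℕ, prior p π j *
          ∫⁻ xs, F (j, xs) * ((ellDens f0 f1 n j (extvec n x xs) : ℝ≥0∞))
            ∂(Measure.pi fun _ : Fin n => μ) := by
  rw [nuMeasure, lintegral_sum_measure]
  refine tsum_congr fun j => ?_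
  rw [lintegral_smul_measure]
  congr 1
  have hFj : Measurable fun xs : Fin n → E => F (j, xs) := hF.comp measurable_prodMk_left
  rw [lintegral_map hF measurable_prodMk_left,
    lintegral_withDensity_eq_lintegral_mul _ (meas_ellDens f0 f1 hf0 hf1 n j x) hFj]
  exact lintegral_congr fun xs => mul_comm _ _

/-- `ν`-a.e., `ν(θ > n | 𝓕_n) = (1-π) pⁿ L₀(x, X₁, …, X_n) / S(x, X₁, …, X_n)`,
i.e. `1 - Π_n = (1-π) pⁿ L₀ / S` where `Π_n = ν(θ ≤ n | 𝓕_n)`. -/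
theorem stmt4 {E : Type*} [MeasurableSpace E] (μ : Measure E) [SigmaFinite μ]
    (f0 f1 : E → E → ℝ≥0) (hf0 : Measurable (Function.uncurry f0))
    (hf1 : Measurable (Function.uncurry f1))
    (hi0 : ∀ z, ∫⁻ y, (f0 z y : ℝ≥0∞) ∂μ = 1) (hi1 : ∀ z, ∫⁻ y, (f1 z y : ℝ≥0∞) ∂μ = 1)
    (p π : ℝ) (hp : p ∈ Set.Ioo (0 : ℝ) 1) (hπ : π ∈ Set.Ioo (0 : ℝ) 1)
    (x : E) (n : ℕ) (hn : 1 ≤ n) :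
    (nuMeasure μ f0 f1 p π x n)[Set.indicator {ω : ℕ × (Fin n → E) | n < ω.1} (fun _ => (1 : ℝ)) |
        Ffil n n le_rfl]
      =ᵐ[nuMeasure μ f0 f1 p π x n] fun ω =>
        (1 - π) * p ^ n * (Lfn f0 f1 0 n 0 (extvec n x ω.2) : ℝ) /
          Sfn f0 f1 p π n (extvec n x ω.2) := by
  obtain ⟨hp0, hp1⟩ := hp
  obtain ⟨hπ0, hπ1⟩ := hπ
  have h1p : (0:ℝ) ≤ 1 - p := by linarith
  have h1π : (0:ℝ) ≤ 1 - π := by linarith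
  set P : Measure (Fin n → E) := Measure.pi fun _ : Fin n => μ with hPdef
  set ν : Measure (ℕ × (Fin n → E)) := nuMeasure μ f0 f1 p π x n with hνdef
  set ψ : (Fin n → E) → ℝ := fun xs =>
    (1 - π) * p ^ n * (Lfn f0 f1 0 n 0 (extvec n x xs) : ℝ) /
      Sfn f0 f1 p π n (extvec n x xs) with hψdef
  -- measurability
  have hLmeas : ∀ m, Measurable fun xs : Fin n → E =>
      ((Lfn f0 f1 0 n m (extvec n x xs) : ℝ≥0) : ℝ) := fun m =>
    (meas_Lfn f0 f1 hf0 hf1 0 n m n x).coe_nnreal_real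
  have hSmeas : Measurable fun xs : Fin n → E => Sfn f0 f1 p π n (extvec n x xs) := by
    unfold Sfn
    apply Measurable.add
    · exact (hLmeas n).const_mul π
    · apply Measurable.const_mul
      apply Measurable.add
      · exact Finset.measurable_sum _ fun i _ => (hLmeas _).const_mul _
      · exact (hLmeas 0).const_mul _
  have hψmeas : Measurable ψ := ((hLmeas 0).const_mul _).div hSmeas
  -- pointwise bounds
  have hSkey : ∀ xs : Fin n → E,
      (1 - π) * p ^ n * ((Lfn f0 f1 0 n 0 (extvec n x xs) : ℝ≥0) : ℝ)
        ≤ Sfn f0 f1 p π n (extvec n x xs)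
      ∧ 0 ≤ Sfn f0 f1 p π n (extvec n x xs) := by
    intro xs
    have hSig : (0:ℝ) ≤ ∑ i ∈ Finset.Icc 1 n,
        p ^ (i - 1) * (1 - p) * ((Lfn f0 f1 0 n (n - i + 1) (extvec n x xs) : ℝ≥0) : ℝ) :=
      Finset.sum_nonneg fun i _ => by positivity
    have h1 : (0:ℝ) ≤ π * ((Lfn f0 f1 0 n n (extvec n x xs) : ℝ≥0) : ℝ) :=
      mul_nonneg hπ0.le (NNReal.coe_nonneg _)
    have h2 : (0:ℝ) ≤ (1 - π) * ∑ i ∈ Finset.Icc 1 n,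
        p ^ (i - 1) * (1 - p) * ((Lfn f0 f1 0 n (n - i + 1) (extvec n x xs) : ℝ≥0) : ℝ) :=
      mul_nonneg h1π hSig
    have h3 : (0:ℝ) ≤ (1 - π) * (p ^ n * ((Lfn f0 f1 0 n 0 (extvec n x xs) : ℝ≥0) : ℝ)) := by
      positivity
    unfold Sfn
    constructor
    · nlinarith
    · nlinarith
  have hψ01 : ∀ xs : Fin n → E, 0 ≤ ψ xs ∧ ψ xs ≤ 1 := by
    intro xs
    have h := hSkey xs
    refine ⟨div_nonneg (by positivity) h.2, div_le_one_of_le₀ h.1 h.2⟩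
  have hψS : ∀ xs : Fin n → E,
      ψ xs * Sfn f0 f1 p π n (extvec n x xs)
        = (1 - π) * p ^ n * ((Lfn f0 f1 0 n 0 (extvec n x xs) : ℝ≥0) : ℝ) := by
    intro xs
    by_cases hS : Sfn f0 f1 p π n (extvec n x xs) = 0
    · have hnum : (1 - π) * p ^ n * ((Lfn f0 f1 0 n 0 (extvec n x xs) : ℝ≥0) : ℝ) = 0 :=
        le_antisymm (hS ▸ (hSkey xs).1) (by positivity)
      simp [hψdef, hS, hnum]
    · exact div_mul_cancel₀ _ hS
  -- densities
  have hdmeas : ∀ j, Measurable fun xs : Fin n → E =>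
      ((ellDens f0 f1 n j (extvec n x xs) : ℝ≥0∞)) := fun j => meas_ellDens f0 f1 hf0 hf1 n j x
  have hd1 : ∀ j, ∫⁻ xs, ((ellDens f0 f1 n j (extvec n x xs) : ℝ≥0∞)) ∂P = 1 :=
    fun j => lintegral_ellDens μ f0 f1 hf0 hf1 hi0 hi1 n j x
  have hprob : IsProbabilityMeasure ν := by
    constructor
    rw [← lintegral_one, hνdef, lintegral_nu μ f0 f1 hf0 hf1 p π x n _ measurable_const]
    simp_rw [one_mul]
    calc ∑' j : ℕ, prior p π j * ∫⁻ xs, ((ellDens f0 f1 n j (extvec n x xs) : ℝ≥0∞)) ∂P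
        = ∑' j : ℕ, prior p π j * 1 := by
          refine tsum_congr fun j => ?_; rw [hd1 j]
      _ = 1 := by simp_rw [mul_one]; exact tsum_prior ⟨hp0, hp1⟩ ⟨hπ0, hπ1⟩
  haveI := hprob
  have hFeq : Ffil n n (le_rfl) = MeasurableSpace.comap
      (Prod.snd : ℕ × (Fin n → E) → (Fin n → E)) inferInstance := rfl
  have hm : Ffil n n (le_rfl) ≤ (inferInstance : MeasurableSpace (ℕ × (Fin n → E))) := by
    rw [hFeq]; exact measurable_snd.comap_le
  haveI : SigmaFinite (ν.trim hm) := by infer_instance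
  have hAmeas : MeasurableSet {ω : ℕ × (Fin n → E) | n < ω.1} :=
    measurable_fst measurableSet_Ioi
  have hf_int : Integrable
      (Set.indicator {ω : ℕ × (Fin n → E) | n < ω.1} fun _ => (1:ℝ)) ν :=
    (integrable_const (1:ℝ)).indicator hAmeas
  have hsndm : Measurable[Ffil n n le_rfl] (Prod.snd : ℕ × (Fin n → E) → (Fin n → E)) := by
    rw [hFeq]; exact Measurable.of_comap_le le_rfl
  have hgm : AEStronglyMeasurable[Ffil n n le_rfl] (fun ω : ℕ × (Fin n → E) => ψ ω.2) ν :=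
    ⟨fun ω => ψ ω.2, (hψmeas.comp hsndm).stronglyMeasurable, Filter.EventuallyEq.rfl⟩
  have hg_int : ∀ s, MeasurableSet[Ffil n n le_rfl] s → ν s < ⊤ →
      IntegrableOn (fun ω : ℕ × (Fin n → E) => ψ ω.2) s ν := by
    intro s _ _
    refine Integrable.integrableOn ?_
    refine (integrable_const (1:ℝ)).mono'
      ((hψmeas.comp measurable_snd).aestronglyMeasurable) (ae_of_all _ fun ω => ?_)
    rw [Real.norm_eq_abs, abs_of_nonneg (hψ01 _).1]
    exact (hψ01 _).2
  have hkey : ∀ B : Set (Fin n → E), MeasurableSet B →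
      ∫ ω in (Prod.snd : ℕ × (Fin n → E) → (Fin n → E)) ⁻¹' B, ψ ω.2 ∂ν
        = ∫ ω in (Prod.snd : ℕ × (Fin n → E) → (Fin n → E)) ⁻¹' B,
            Set.indicator {ω : ℕ × (Fin n → E) | n < ω.1} (fun _ => (1:ℝ)) ω ∂ν := by
    intro B hB
    have hsmeas : MeasurableSet ((Prod.snd : ℕ × (Fin n → E) → (Fin n → E)) ⁻¹' B) :=
      measurable_snd hB
    set I : ℝ≥0∞ := ∫⁻ xs, B.indicator
      (fun xs => ((Lfn f0 f1 0 n 0 (extvec n x xs) : ℝ≥0∞))) xs ∂P with hIdef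
    set c : ℝ≥0∞ := ENNReal.ofReal ((1 - π) * p ^ n) with hcdef
    have hR : ∫ ω in (Prod.snd : ℕ × (Fin n → E) → (Fin n → E)) ⁻¹' B,
        Set.indicator {ω : ℕ × (Fin n → E) | n < ω.1} (fun _ => (1:ℝ)) ω ∂ν
        = (ν ({ω : ℕ × (Fin n → E) | n < ω.1} ∩ Prod.snd ⁻¹' B)).toReal := by
      rw [integral_indicator hAmeas, setIntegral_const, measureReal_restrict_apply hAmeas,
        smul_eq_mul, mul_one, measureReal_def]
    have hmeasval : ν ({ω : ℕ × (Fin n → E) | n < ω.1} ∩ Prod.snd ⁻¹' B) = c * I := by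
      have hA : MeasurableSet ({ω : ℕ × (Fin n → E) | n < ω.1} ∩ Prod.snd ⁻¹' B) :=
        hAmeas.inter hsmeas
      rw [← lintegral_indicator_one hA, hνdef,
        lintegral_nu μ f0 f1 hf0 hf1 p π x n _ (measurable_one.indicator hA)]
      have hptw : ∀ (j : ℕ),
          (∫⁻ xs, Set.indicator ({ω : ℕ × (Fin n → E) | n < ω.1} ∩ Prod.snd ⁻¹' B)
              (1 : ℕ × (Fin n → E) → ℝ≥0∞) (j, xs) * ((ellDens f0 f1 n j (extvec n x xs) : ℝ≥0∞)) ∂P)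
            = if n < j then I else 0 := by
        intro j
        by_cases hj : n < j
        · rw [if_pos hj]
          refine lintegral_congr fun xs => ?_
          have hell : ellDens f0 f1 n j (extvec n x xs) = Lfn f0 f1 0 n 0 (extvec n x xs) := by
            unfold ellDens; rw [if_neg (by omega), if_neg (by omega)]
          by_cases hxB : xs ∈ B
          · have hmem : (j, xs) ∈ {ω : ℕ × (Fin n → E) | n < ω.1} ∩ Prod.snd ⁻¹' B :=
              ⟨hj, hxB⟩
            rw [Set.indicator_of_mem hmem, Set.indicator_of_mem hxB, hell, Pi.one_apply,
              one_mul]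
          · have hmem : (j, xs) ∉ {ω : ℕ × (Fin n → E) | n < ω.1} ∩ Prod.snd ⁻¹' B :=
              fun hmem => hxB hmem.2
            rw [Set.indicator_of_notMem hmem, Set.indicator_of_notMem hxB, zero_mul]
        · rw [if_neg hj]
          have : ∀ xs : Fin n → E,
              Set.indicator ({ω : ℕ × (Fin n → E) | n < ω.1} ∩ Prod.snd ⁻¹' B)
                (1 : ℕ × (Fin n → E) → ℝ≥0∞) (j, xs) * ((ellDens f0 f1 n j (extvec n x xs) : ℝ≥0∞)) = 0 := by
            intro xs
            have hmem : (j, xs) ∉ {ω : ℕ × (Fin n → E) | n < ω.1} ∩ Prod.snd ⁻¹' B :=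
              fun hmem => hj hmem.1
            rw [Set.indicator_of_notMem hmem, zero_mul]
          rw [lintegral_congr this, lintegral_zero]
      calc ∑' (j : ℕ), prior p π j *
            ∫⁻ xs, Set.indicator ({ω : ℕ × (Fin n → E) | n < ω.1} ∩ Prod.snd ⁻¹' B)
              (1 : ℕ × (Fin n → E) → ℝ≥0∞) (j, xs) * ((ellDens f0 f1 n j (extvec n x xs) : ℝ≥0∞)) ∂P
          = ∑' (j : ℕ), (if n < j then prior p π j * I else 0) := by
            refine tsum_congr fun j => ?_
            rw [hptw j]
            by_cases hj : n < j <;> simp [hj]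
        _ = c * I := by
            rw [← Summable.sum_add_tsum_nat_add' (k := n+1) ENNReal.summable]
            have hhead : ∑ j ∈ Finset.range (n+1), (if n < j then prior p π j * I else 0) = 0 :=
              Finset.sum_eq_zero fun j hj => by
                rw [Finset.mem_range] at hj; rw [if_neg (by omega)]
            have htail : (∑' (j : ℕ), if n < j + (n+1) then prior p π (j + (n+1)) * I else 0)
                = (∑' (j : ℕ), prior p π (j + (n+1))) * I := by
              rw [← ENNReal.tsum_mul_right]
              exact tsum_congr fun j => by rw [if_pos (by omega)]
            rw [hhead, htail, zero_add, tsum_prior_tail ⟨hp0, hp1⟩ ⟨hπ0, hπ1⟩ n]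
    have hLcalc : ∫ ω in (Prod.snd : ℕ × (Fin n → E) → (Fin n → E)) ⁻¹' B, ψ ω.2 ∂ν
        = (c * I).toReal := by
      rw [integral_eq_lintegral_of_nonneg_ae (ae_of_all _ fun ω : ℕ × (Fin n → E) => (hψ01 ω.2).1)
        ((hψmeas.comp measurable_snd).aestronglyMeasurable)]
      congr 1
      have hFm : Measurable fun ω : ℕ × (Fin n → E) =>
          Set.indicator (Prod.snd ⁻¹' B)
            (fun ω : ℕ × (Fin n → E) => ENNReal.ofReal (ψ ω.2)) ω := by
        have : Measurable fun ω : ℕ × (Fin n → E) => ENNReal.ofReal (ψ ω.2) :=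
          ENNReal.measurable_ofReal.comp (hψmeas.comp measurable_snd)
        exact this.indicator hsmeas
      rw [← lintegral_indicator hsmeas, hνdef,
        lintegral_nu μ f0 f1 hf0 hf1 p π x n _ hFm]
      have hmeasj : ∀ j : ℕ, Measurable fun xs : Fin n → E =>
          B.indicator (fun xs => ENNReal.ofReal (ψ xs)) xs
            * ((ellDens f0 f1 n j (extvec n x xs) : ℝ≥0∞)) := fun j =>
        ((ENNReal.measurable_ofReal.comp hψmeas).indicator hB).mul (hdmeas j)
      calc ∑' (j : ℕ), prior p π j *
            ∫⁻ xs, Set.indicator (Prod.snd ⁻¹' B)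
              (fun ω : ℕ × (Fin n → E) => ENNReal.ofReal (ψ ω.2)) (j, xs)
              * ((ellDens f0 f1 n j (extvec n x xs) : ℝ≥0∞)) ∂P
          = ∑' (j : ℕ), ∫⁻ xs, prior p π j * (B.indicator (fun xs => ENNReal.ofReal (ψ xs)) xs
              * ((ellDens f0 f1 n j (extvec n x xs) : ℝ≥0∞))) ∂P := by
            refine tsum_congr fun j => ?_
            rw [lintegral_const_mul _ (hmeasj j)]
            congr 1
        _ = ∫⁻ xs, ∑' (j : ℕ), prior p π j * (B.indicator (fun xs => ENNReal.ofReal (ψ xs)) xs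
              * ((ellDens f0 f1 n j (extvec n x xs) : ℝ≥0∞))) ∂P :=
            (lintegral_tsum fun j => ((hmeasj j).const_mul _).aemeasurable).symm
        _ = ∫⁻ xs, B.indicator (fun xs => ENNReal.ofReal (ψ xs)) xs
              * ENNReal.ofReal (Sfn f0 f1 p π n (extvec n x xs)) ∂P := by
            refine lintegral_congr fun xs => ?_
            have hc : ∀ j : ℕ, prior p π j * (B.indicator (fun xs => ENNReal.ofReal (ψ xs)) xs
                * ((ellDens f0 f1 n j (extvec n x xs) : ℝ≥0∞)))
                = B.indicator (fun xs => ENNReal.ofReal (ψ xs)) xs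
                  * (prior p π j * ((ellDens f0 f1 n j (extvec n x xs) : ℝ≥0∞))) := fun j => by
              ring
            rw [tsum_congr hc, ENNReal.tsum_mul_left,
              tsum_prior_ellDens f0 f1 ⟨hp0, hp1⟩ ⟨hπ0, hπ1⟩ n (extvec n x xs)]
        _ = ∫⁻ xs, c * B.indicator
              (fun xs => ((Lfn f0 f1 0 n 0 (extvec n x xs) : ℝ≥0∞))) xs ∂P := by
            refine lintegral_congr fun xs => ?_
            by_cases hxB : xs ∈ B
            · rw [Set.indicator_of_mem hxB, Set.indicator_of_mem hxB,
                ← ENNReal.ofReal_mul (hψ01 xs).1, hψS xs,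
                ENNReal.ofReal_mul (by positivity), ENNReal.ofReal_coe_nnreal]
            · rw [Set.indicator_of_notMem hxB, Set.indicator_of_notMem hxB, zero_mul,
                mul_zero]
        _ = c * I := lintegral_const_mul c
              ((meas_Lfn f0 f1 hf0 hf1 0 n 0 n x).coe_nnreal_ennreal.indicator hB)
    rw [hLcalc, hR, hmeasval]
  refine (ae_eq_condExp_of_forall_setIntegral_eq hm hf_int hg_int ?_ hgm).symm
  intro s hs _
  rw [hFeq] at hs
  obtain ⟨B, hB, rfl⟩ := hs
  exact hkey B hB
end

section
/- In the change-point model below, for every k ≥ 0, ν-almost everywhere ν(θ ≤ n + k | 𝓕_n) = 1 − p^k (1 − Π_n), where Π_n := ν(θ ≤ n | 𝓕_n). Equivalently, ν(θ > n + k | 𝓕_n) = (1 − π) p^{n+k} L₀(x, X₁, …, X_n) / S(x, X₁, …, X_n) ν-almost everywhere. -/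
open MeasureTheory Finset
open scoped NNReal ENNReal

open MeasureTheory

section CPAux

open scoped NNReal ENNReal
open MeasureTheory Finset

namespace CPAux

variable {E : Type*} [MeasurableSpace E]

lemma measurable_extvec (n : ℕ) (x : E) (r : ℕ) :
    Measurable fun xs : Fin n → E => extvec n x xs r := by
  unfold extvec
  by_cases h : 1 ≤ r ∧ r ≤ n
  · simp only [dif_pos h]; exact measurable_pi_apply _
  · simp only [dif_neg h]; exact measurable_const

lemma measurable_Lfn (f0 f1 : E → E → ℝ≥0) (hf0 : Measurable (Function.uncurry f0))
    (hf1 : Measurable (Function.uncurry f1)) (k N m n : ℕ) (x : E) :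
    Measurable fun xs : Fin n → E => Lfn f0 f1 k N m (extvec n x xs) := by
  unfold Lfn
  refine Measurable.mul ?_ ?_ <;>
    exact Finset.measurable_prod _ fun r _ => by
      first
      | exact hf0.comp ((measurable_extvec n x (r - 1)).prodMk (measurable_extvec n x r))
      | exact hf1.comp ((measurable_extvec n x (r - 1)).prodMk (measurable_extvec n x r))

lemma measurable_ellDens (f0 f1 : E → E → ℝ≥0) (hf0 : Measurable (Function.uncurry f0))
    (hf1 : Measurable (Function.uncurry f1)) (n j : ℕ) (x : E) :
    Measurable fun xs : Fin n → E => (ellDens f0 f1 n j (extvec n x xs) : ℝ≥0∞) := by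
  unfold ellDens
  split_ifs <;> exact (measurable_Lfn f0 f1 hf0 hf1 _ _ _ _ x).coe_nnreal_ennreal

lemma extvec_snoc_of_le {n : ℕ} {x : E} (xs : Fin n → E) (y : E) {r : ℕ} (hr : r ≤ n) :
    extvec (n + 1) x (Fin.snoc xs y) r = extvec n x xs r := by
  unfold extvec
  by_cases h : 1 ≤ r ∧ r ≤ n
  · rw [dif_pos ⟨h.1, h.2.trans (Nat.le_succ n)⟩, dif_pos h]
    have he : (⟨r - 1, by omega⟩ : Fin (n + 1)) = Fin.castSucc ⟨r - 1, by omega⟩ := rfl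
    rw [he, Fin.snoc_castSucc]
  · rw [dif_neg (by omega), dif_neg h]

lemma extvec_snoc_last {n : ℕ} {x : E} (xs : Fin n → E) (y : E) :
    extvec (n + 1) x (Fin.snoc xs y) (n + 1) = y := by
  unfold extvec
  rw [dif_pos ⟨by omega, le_rfl⟩]
  have he : (⟨n + 1 - 1, by omega⟩ : Fin (n + 1)) = Fin.last n := by
    ext; simp
  rw [he, Fin.snoc_last]

end CPAux
end CPAux

namespace CPAux
set_option linter.unusedSectionVars false

variable {E : Type*} [MeasurableSpace E]

lemma measurable_pattern_prod (g : ℕ → E → E → ℝ≥0)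
    (hg : ∀ r, Measurable (Function.uncurry (g r))) (n : ℕ) (x : E) (s : Finset ℕ) :
    Measurable fun xs : Fin n → E =>
      ∏ r ∈ s, (g r (extvec n x xs (r - 1)) (extvec n x xs r) : ℝ≥0∞) :=
  Finset.measurable_prod _ fun r _ =>
    ((hg r).comp ((measurable_extvec n x (r - 1)).prodMk
      (measurable_extvec n x r))).coe_nnreal_ennreal

lemma lintegral_pattern_prod (μ : Measure E) [SigmaFinite μ] (g : ℕ → E → E → ℝ≥0)
    (hg : ∀ r, Measurable (Function.uncurry (g r)))
    (hgi : ∀ r z, ∫⁻ y, (g r z y : ℝ≥0∞) ∂μ = 1) :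
    ∀ (n : ℕ) (x : E),
      ∫⁻ xs, ∏ r ∈ Finset.Icc 1 n, (g r (extvec n x xs (r - 1)) (extvec n x xs r) : ℝ≥0∞)
        ∂(Measure.pi fun _ : Fin n => μ) = 1 := by
  intro n
  induction n with
  | zero =>
    intro x
    rw [Finset.Icc_eq_empty (by omega)]
    simp [Measure.pi_univ]
  | succ n ih =>
    intro x
    have hF : Measurable fun xs : Fin (n + 1) → E =>
        ∏ r ∈ Finset.Icc 1 (n + 1),
          (g r (extvec (n + 1) x xs (r - 1)) (extvec (n + 1) x xs r) : ℝ≥0∞) :=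
      measurable_pattern_prod g hg (n + 1) x _
    have hmp := (measurePreserving_piFinSuccAbove (fun _ : Fin (n + 1) => μ) (Fin.last n)).symm
    rw [← hmp.lintegral_comp hF]
    have hsymm : ∀ (y : E) (xs : Fin n → E),
        (MeasurableEquiv.piFinSuccAbove (fun _ : Fin (n + 1) => E) (Fin.last n)).symm (y, xs)
          = Fin.snoc xs y := by
      intro y xs
      simp [MeasurableEquiv.piFinSuccAbove_symm_apply, Fin.insertNthEquiv, Fin.insertNth_last']
    have hprod : ∀ (y : E) (xs : Fin n → E),
        (∏ r ∈ Finset.Icc 1 (n + 1),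
          (g r (extvec (n + 1) x (Fin.snoc xs y) (r - 1))
            (extvec (n + 1) x (Fin.snoc xs y) r) : ℝ≥0∞))
          = (∏ r ∈ Finset.Icc 1 n, (g r (extvec n x xs (r - 1)) (extvec n x xs r) : ℝ≥0∞)) *
            (g (n + 1) (extvec n x xs n) y : ℝ≥0∞) := by
      intro y xs
      have hins : Finset.Icc 1 (n + 1) = insert (n + 1) (Finset.Icc 1 n) := by
        ext r; simp only [Finset.mem_Icc, Finset.mem_insert]; omega
      rw [hins, Finset.prod_insert (by simp), mul_comm]
      congr 1
      · refine Finset.prod_congr rfl fun r hr => ?_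
        have hr' := Finset.mem_Icc.mp hr
        rw [extvec_snoc_of_le xs y (by omega), extvec_snoc_of_le xs y (by omega)]
      · have h1 : n + 1 - 1 = n := by omega
        rw [h1, extvec_snoc_of_le xs y le_rfl, extvec_snoc_last]
    have hae : AEMeasurable
        (fun z : E × (Fin n → E) =>
          ∏ r ∈ Finset.Icc 1 (n + 1),
            (g r (extvec (n + 1) x
              ((MeasurableEquiv.piFinSuccAbove (fun _ : Fin (n + 1) => E) (Fin.last n)).symm z)
                (r - 1))
              (extvec (n + 1) x
                ((MeasurableEquiv.piFinSuccAbove (fun _ : Fin (n + 1) => E) (Fin.last n)).symm z)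
                r) : ℝ≥0∞))
        ((μ.prod (Measure.pi fun _ : Fin n => μ))) :=
      (hF.comp (MeasurableEquiv.measurable _)).aemeasurable
    rw [lintegral_prod_symm _ hae]
    calc
      ∫⁻ xs, ∫⁻ y,
          ∏ r ∈ Finset.Icc 1 (n + 1),
            (g r (extvec (n + 1) x
              ((MeasurableEquiv.piFinSuccAbove (fun _ : Fin (n + 1) => E) (Fin.last n)).symm
                (y, xs)) (r - 1))
              (extvec (n + 1) x
                ((MeasurableEquiv.piFinSuccAbove (fun _ : Fin (n + 1) => E) (Fin.last n)).symm
                  (y, xs)) r) : ℝ≥0∞) ∂μ ∂(Measure.pi fun _ : Fin n => μ)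
        = ∫⁻ xs, ∏ r ∈ Finset.Icc 1 n,
            (g r (extvec n x xs (r - 1)) (extvec n x xs r) : ℝ≥0∞)
            ∂(Measure.pi fun _ : Fin n => μ) := by
          refine lintegral_congr fun xs => ?_
          have : ∀ y : E,
              (∏ r ∈ Finset.Icc 1 (n + 1),
                (g r (extvec (n + 1) x
                  ((MeasurableEquiv.piFinSuccAbove (fun _ : Fin (n + 1) => E)
                    (Fin.last n)).symm (y, xs)) (r - 1))
                  (extvec (n + 1) x
                    ((MeasurableEquiv.piFinSuccAbove (fun _ : Fin (n + 1) => E)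
                      (Fin.last n)).symm (y, xs)) r) : ℝ≥0∞))
                = (∏ r ∈ Finset.Icc 1 n,
                    (g r (extvec n x xs (r - 1)) (extvec n x xs r) : ℝ≥0∞)) *
                  (g (n + 1) (extvec n x xs n) y : ℝ≥0∞) := by
            intro y; rw [hsymm y xs]; exact hprod y xs
          have hgm : Measurable fun y : E => (g (n + 1) (extvec n x xs n) y : ℝ≥0∞) :=
            ((hg (n + 1)).comp measurable_prodMk_left).coe_nnreal_ennreal
          rw [lintegral_congr this, lintegral_const_mul _ hgm,
            hgi (n + 1) (extvec n x xs n), mul_one]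
      _ = 1 := ih x

end CPAux

namespace CPAux
set_option linter.unusedSectionVars false

variable {E : Type*} [MeasurableSpace E]

lemma Lfn_eq_prod (f0 f1 : E → E → ℝ≥0) (N m : ℕ) (xv : ℕ → E) :
    Lfn f0 f1 0 N m xv
      = ∏ r ∈ Finset.Icc 1 N, (if r ≤ N - m then f0 else f1) (xv (r - 1)) (xv r) := by
  unfold Lfn
  have hu : Finset.Icc 1 N = Finset.Icc 1 (N - m) ∪ Finset.Icc (N - m + 1) N := by
    ext r; simp only [Finset.mem_Icc, Finset.mem_union]; omega
  have hd : Disjoint (Finset.Icc 1 (N - m)) (Finset.Icc (N - m + 1) N) := by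
    rw [Finset.disjoint_left]; intro r h1 h2
    simp only [Finset.mem_Icc] at h1 h2; omega
  rw [hu, Finset.prod_union hd, Nat.zero_add]
  congr 1
  · exact Finset.prod_congr rfl fun r hr => by
      rw [if_pos (Finset.mem_Icc.mp hr).2]
  · exact Finset.prod_congr rfl fun r hr => by
      rw [if_neg (by have := (Finset.mem_Icc.mp hr).1; omega)]

lemma lintegral_Lfn (μ : Measure E) [SigmaFinite μ] (f0 f1 : E → E → ℝ≥0)
    (hf0 : Measurable (Function.uncurry f0)) (hf1 : Measurable (Function.uncurry f1))
    (hi0 : ∀ z, ∫⁻ y, (f0 z y : ℝ≥0∞) ∂μ = 1) (hi1 : ∀ z, ∫⁻ y, (f1 z y : ℝ≥0∞) ∂μ = 1)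
    (n m : ℕ) (x : E) :
    ∫⁻ xs, (Lfn f0 f1 0 n m (extvec n x xs) : ℝ≥0∞) ∂(Measure.pi fun _ : Fin n => μ) = 1 := by
  have h := lintegral_pattern_prod μ (fun r => if r ≤ n - m then f0 else f1)
    (fun r => by split_ifs <;> assumption)
    (fun r z => by split_ifs <;> first | exact hi0 z | exact hi1 z) n x
  rw [← h]
  refine lintegral_congr fun xs => ?_
  rw [Lfn_eq_prod, ENNReal.coe_finset_prod]

lemma lintegral_ellDens (μ : Measure E) [SigmaFinite μ] (f0 f1 : E → E → ℝ≥0)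
    (hf0 : Measurable (Function.uncurry f0)) (hf1 : Measurable (Function.uncurry f1))
    (hi0 : ∀ z, ∫⁻ y, (f0 z y : ℝ≥0∞) ∂μ = 1) (hi1 : ∀ z, ∫⁻ y, (f1 z y : ℝ≥0∞) ∂μ = 1)
    (n j : ℕ) (x : E) :
    ∫⁻ xs, (ellDens f0 f1 n j (extvec n x xs) : ℝ≥0∞) ∂(Measure.pi fun _ : Fin n => μ) = 1 := by
  unfold ellDens
  split_ifs <;> exact lintegral_Lfn μ f0 f1 hf0 hf1 hi0 hi1 n _ x

/-- Real-valued prior. -/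
def priorR (p π : ℝ) (j : ℕ) : ℝ :=
  if j = 0 then π else (1 - π) * p ^ (j - 1) * (1 - p)

lemma prior_eq_ofReal (p π : ℝ) (j : ℕ) : prior p π j = ENNReal.ofReal (priorR p π j) := by
  unfold prior priorR; split_ifs <;> rfl

lemma priorR_nonneg {p π : ℝ} (hp : p ∈ Set.Ioo (0 : ℝ) 1) (hπ : π ∈ Set.Ioo (0 : ℝ) 1) (j : ℕ) :
    0 ≤ priorR p π j := by
  unfold priorR
  obtain ⟨hp0, hp1⟩ := hp; obtain ⟨hπ0, hπ1⟩ := hπ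
  split_ifs
  · linarith
  · exact mul_nonneg (mul_nonneg (by linarith) (pow_nonneg hp0.le _)) (by linarith)

lemma prior_tail {p π : ℝ} (hp : p ∈ Set.Ioo (0 : ℝ) 1) (hπ : π ∈ Set.Ioo (0 : ℝ) 1) (m : ℕ) :
    ∑' i : ℕ, prior p π (i + (m + 1)) = ENNReal.ofReal ((1 - π) * p ^ m) := by
  obtain ⟨hp0, hp1⟩ := hp; obtain ⟨hπ0, hπ1⟩ := hπ
  have h1 : ∀ i : ℕ, prior p π (i + (m + 1))
      = ENNReal.ofReal ((1 - π) * p ^ m * (1 - p) * p ^ i) := by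
    intro i
    unfold prior
    rw [if_neg (by omega)]
    congr 1
    have h2 : i + (m + 1) - 1 = m + i := by omega
    rw [h2, pow_add]; ring
  rw [tsum_congr h1, ← ENNReal.ofReal_tsum_of_nonneg
    (fun i => mul_nonneg (mul_nonneg (mul_nonneg (by linarith) (pow_nonneg hp0.le m))
      (by linarith)) (pow_nonneg hp0.le i))
    (((summable_geometric_of_lt_one hp0.le hp1).mul_left _))]
  congr 1
  rw [tsum_mul_left, tsum_geometric_of_lt_one hp0.le hp1]
  have hne : (1:ℝ) - p ≠ 0 := by linarith
  field_simp

lemma prior_total {p π : ℝ} (hp : p ∈ Set.Ioo (0 : ℝ) 1) (hπ : π ∈ Set.Ioo (0 : ℝ) 1) :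
    ∑' j : ℕ, prior p π j = 1 := by
  have htail := prior_tail hp hπ 0
  simp only [zero_add, pow_zero, mul_one] at htail
  rw [tsum_eq_zero_add' (f := prior p π) ?_]
  · rw [htail]
    unfold prior
    rw [if_pos rfl, ← ENNReal.ofReal_add hπ.1.le (by linarith [hπ.2]), ← ENNReal.ofReal_one]
    congr 1; ring
  · exact ENNReal.summable
end CPAux

namespace CPAux
set_option linter.unusedSectionVars false

variable {E : Type*} [MeasurableSpace E]

lemma nuMeasure_apply (μ : Measure E) [SigmaFinite μ] (f0 f1 : E → E → ℝ≥0) (p π : ℝ)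
    (x : E) (n : ℕ) {W : Set (ℕ × (Fin n → E))} (hW : MeasurableSet W) :
    nuMeasure μ f0 f1 p π x n W
      = ∑' j : ℕ, prior p π j *
          ∫⁻ xs in {xs | (j, xs) ∈ W}, (ellDens f0 f1 n j (extvec n x xs) : ℝ≥0∞)
            ∂(Measure.pi fun _ : Fin n => μ) := by
  rw [nuMeasure, Measure.sum_apply _ hW]
  refine tsum_congr fun j => ?_
  rw [Measure.smul_apply, smul_eq_mul,
    Measure.map_apply measurable_prodMk_left hW,
    withDensity_apply _ (measurable_prodMk_left hW)]
  rfl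

lemma lintegral_nuMeasure (μ : Measure E) [SigmaFinite μ] (f0 f1 : E → E → ℝ≥0)
    (hf0 : Measurable (Function.uncurry f0)) (hf1 : Measurable (Function.uncurry f1))
    (p π : ℝ) (x : E) (n : ℕ) (F : ℕ × (Fin n → E) → ℝ≥0∞) (hF : Measurable F) :
    ∫⁻ ω, F ω ∂(nuMeasure μ f0 f1 p π x n)
      = ∑' j : ℕ, prior p π j *
          ∫⁻ xs, (ellDens f0 f1 n j (extvec n x xs) : ℝ≥0∞) * F (j, xs)
            ∂(Measure.pi fun _ : Fin n => μ) := by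
  rw [nuMeasure, lintegral_sum_measure]
  refine tsum_congr fun j => ?_
  rw [lintegral_smul_measure, lintegral_map hF measurable_prodMk_left]
  congr 1
  rw [lintegral_withDensity_eq_lintegral_mul _ (measurable_ellDens f0 f1 hf0 hf1 n j x)
    (show Measurable fun xs : Fin n → E => F (j, xs) from hF.comp measurable_prodMk_left)]
  rfl

lemma isProbability_nuMeasure (μ : Measure E) [SigmaFinite μ] (f0 f1 : E → E → ℝ≥0)
    (hf0 : Measurable (Function.uncurry f0)) (hf1 : Measurable (Function.uncurry f1))
    (hi0 : ∀ z, ∫⁻ y, (f0 z y : ℝ≥0∞) ∂μ = 1) (hi1 : ∀ z, ∫⁻ y, (f1 z y : ℝ≥0∞) ∂μ = 1)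
    {p π : ℝ} (hp : p ∈ Set.Ioo (0 : ℝ) 1) (hπ : π ∈ Set.Ioo (0 : ℝ) 1) (x : E) (n : ℕ) :
    IsProbabilityMeasure (nuMeasure μ f0 f1 p π x n) := by
  constructor
  rw [nuMeasure_apply μ f0 f1 p π x n MeasurableSet.univ]
  have h1 : ∀ j : ℕ, {xs : Fin n → E | (j, xs) ∈ (Set.univ : Set (ℕ × (Fin n → E)))}
      = Set.univ := fun j => rfl
  calc
    ∑' j : ℕ, prior p π j *
        ∫⁻ xs in {xs | (j, xs) ∈ (Set.univ : Set (ℕ × (Fin n → E)))},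
          (ellDens f0 f1 n j (extvec n x xs) : ℝ≥0∞) ∂(Measure.pi fun _ : Fin n => μ)
      = ∑' j : ℕ, prior p π j := by
        refine tsum_congr fun j => ?_
        rw [h1 j, Measure.restrict_univ, lintegral_ellDens μ f0 f1 hf0 hf1 hi0 hi1 n j x,
          mul_one]
    _ = 1 := prior_total hp hπ

lemma Sfn_nonneg_terms {p π : ℝ} (hp : p ∈ Set.Ioo (0 : ℝ) 1) (hπ : π ∈ Set.Ioo (0 : ℝ) 1)
    (f0 f1 : E → E → ℝ≥0) (n : ℕ) (xv : ℕ → E) :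
    0 ≤ Sfn f0 f1 p π n xv ∧
      (1 - π) * p ^ n * (Lfn f0 f1 0 n 0 xv : ℝ) ≤ Sfn f0 f1 p π n xv := by
  obtain ⟨hp0, hp1⟩ := hp; obtain ⟨hπ0, hπ1⟩ := hπ
  have hS : 0 ≤ ∑ i ∈ Finset.Icc 1 n,
      p ^ (i - 1) * (1 - p) * (Lfn f0 f1 0 n (n - i + 1) xv : ℝ) :=
    Finset.sum_nonneg fun i _ =>
      mul_nonneg (mul_nonneg (pow_nonneg hp0.le _) (by linarith)) (NNReal.coe_nonneg _)
  have h1 : 0 ≤ π * (Lfn f0 f1 0 n n xv : ℝ) := mul_nonneg hπ0.le (NNReal.coe_nonneg _)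
  have h2 : 0 ≤ p ^ n * (Lfn f0 f1 0 n 0 xv : ℝ) :=
    mul_nonneg (pow_nonneg hp0.le _) (NNReal.coe_nonneg _)
  have h3 : (0:ℝ) ≤ 1 - π := by linarith
  unfold Sfn
  constructor
  · have := mul_nonneg h3 (add_nonneg hS h2); linarith
  · nlinarith [mul_nonneg h3 hS]

/-- Pointwise identity: the total density is `ofReal (Sfn)`. -/
lemma density_eq (f0 f1 : E → E → ℝ≥0) {p π : ℝ}
    (hp : p ∈ Set.Ioo (0 : ℝ) 1) (hπ : π ∈ Set.Ioo (0 : ℝ) 1) (n : ℕ) (xv : ℕ → E) :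
    ∑' j : ℕ, prior p π j * (ellDens f0 f1 n j xv : ℝ≥0∞)
      = ENNReal.ofReal (Sfn f0 f1 p π n xv) := by
  obtain ⟨hp0, hp1⟩ := hp; obtain ⟨hπ0, hπ1⟩ := hπ
  set a : ℕ → ℝ := fun j => priorR p π j * (ellDens f0 f1 n j xv : ℝ) with ha
  have hanneg : ∀ j, 0 ≤ a j := fun j =>
    mul_nonneg (priorR_nonneg ⟨hp0, hp1⟩ ⟨hπ0, hπ1⟩ j) (NNReal.coe_nonneg _)
  have hshift : ∀ i : ℕ, a (i + (n + 1))
      = (1 - π) * p ^ n * (1 - p) * (Lfn f0 f1 0 n 0 xv : ℝ) * p ^ i := by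
    intro i
    have hj0 : ¬(i + (n + 1) = 0) := by omega
    have hjn : ¬(i + (n + 1) ≤ n) := by omega
    simp only [ha]
    unfold priorR ellDens
    rw [if_neg hj0, if_neg hj0, if_neg hjn]
    have h2 : i + (n + 1) - 1 = n + i := by omega
    rw [h2, pow_add]; ring
  have hsum : Summable fun i => a (i + (n + 1)) := by
    refine Summable.congr (((summable_geometric_of_lt_one hp0.le hp1).mul_left
      ((1 - π) * p ^ n * (1 - p) * (Lfn f0 f1 0 n 0 xv : ℝ)))) fun i => ?_
    rw [hshift i]
  have htail : ∑' i : ℕ, a (i + (n + 1)) = (1 - π) * p ^ n * (Lfn f0 f1 0 n 0 xv : ℝ) := by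
    rw [tsum_congr hshift, tsum_mul_left, tsum_geometric_of_lt_one hp0.le hp1]
    have hne : (1:ℝ) - p ≠ 0 := by linarith
    field_simp
  calc
    ∑' j : ℕ, prior p π j * (ellDens f0 f1 n j xv : ℝ≥0∞)
      = ∑' j : ℕ, ENNReal.ofReal (a j) := by
        refine tsum_congr fun j => ?_
        rw [prior_eq_ofReal, ha]
        rw [ENNReal.ofReal_mul (priorR_nonneg ⟨hp0, hp1⟩ ⟨hπ0, hπ1⟩ j),
          ENNReal.ofReal_coe_nnreal]
    _ = ENNReal.ofReal (∑' j, a j) :=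
        (ENNReal.ofReal_tsum_of_nonneg hanneg ((summable_nat_add_iff (n + 1)).mp hsum)).symm
    _ = ENNReal.ofReal (Sfn f0 f1 p π n xv) := by
        congr 1
        rw [← Summable.sum_add_tsum_nat_add' hsum, htail]
        have hins : Finset.range (n + 1) = insert 0 (Finset.Icc 1 n) := by
          ext r; simp only [Finset.mem_range, Finset.mem_insert, Finset.mem_Icc]; omega
        rw [hins, Finset.sum_insert (by simp)]
        have ha0 : a 0 = π * (Lfn f0 f1 0 n n xv : ℝ) := by
          simp only [ha]
          unfold priorR ellDens
          rw [if_pos rfl, if_pos rfl]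
        have haj : ∀ j ∈ Finset.Icc 1 n, a j
            = (1 - π) * (p ^ (j - 1) * (1 - p) * (Lfn f0 f1 0 n (n - j + 1) xv : ℝ)) := by
          intro j hj
          obtain ⟨hj1, hj2⟩ := Finset.mem_Icc.mp hj
          simp only [ha]
          unfold priorR ellDens
          rw [if_neg (by omega : ¬j = 0), if_neg (by omega : ¬j = 0), if_pos hj2]
          ring
        rw [ha0, Finset.sum_congr rfl haj, ← Finset.mul_sum]
        unfold Sfn
        ring

end CPAux

namespace CPAux
set_option linter.unusedSectionVars false
variable {E : Type*} [MeasurableSpace E]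

example (n : ℕ) : Ffil (E := E) n n le_rfl = MeasurableSpace.comap Prod.snd inferInstance := rfl

example (n k : ℕ) : MeasurableSet {ω : ℕ × (Fin n → E) | n + k < ω.1} :=
  measurable_fst measurableSet_Ioi

lemma measurable_Sfn (f0 f1 : E → E → ℝ≥0) (hf0 : Measurable (Function.uncurry f0))
    (hf1 : Measurable (Function.uncurry f1)) (p π : ℝ) (n : ℕ) (x : E) :
    Measurable fun xs : Fin n → E => Sfn f0 f1 p π n (extvec n x xs) := by
  unfold Sfn
  refine Measurable.add ?_ (Measurable.const_mul (Measurable.add ?_ ?_) _)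
  · exact ((measurable_Lfn f0 f1 hf0 hf1 0 n n n x).coe_nnreal_real).const_mul _
  · exact Finset.measurable_sum _ fun i _ =>
      ((measurable_Lfn f0 f1 hf0 hf1 0 n _ n x).coe_nnreal_real).const_mul _
  · exact ((measurable_Lfn f0 f1 hf0 hf1 0 n 0 n x).coe_nnreal_real).const_mul _

lemma Sfn_mul_div {p π : ℝ} (hp : p ∈ Set.Ioo (0 : ℝ) 1) (hπ : π ∈ Set.Ioo (0 : ℝ) 1)
    (f0 f1 : E → E → ℝ≥0) (n : ℕ) (xv : ℕ → E) (c : ℝ) :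
    Sfn f0 f1 p π n xv * (c * (Lfn f0 f1 0 n 0 xv : ℝ) / Sfn f0 f1 p π n xv)
      = c * (Lfn f0 f1 0 n 0 xv : ℝ) := by
  rcases eq_or_ne (Sfn f0 f1 p π n xv) 0 with h | h
  · have hpos : 0 < (1 - π) * p ^ n := mul_pos (by linarith [hπ.2]) (pow_pos hp.1 n)
    have hL : (Lfn f0 f1 0 n 0 xv : ℝ) = 0 := by
      obtain ⟨h0, hge⟩ := Sfn_nonneg_terms hp hπ f0 f1 n xv
      refine le_antisymm ?_ (NNReal.coe_nonneg _)
      nlinarith [NNReal.coe_nonneg (Lfn f0 f1 0 n 0 xv)]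
    rw [hL]; simp
  · rw [mul_comm, div_mul_cancel₀ _ h]
end CPAux

namespace CPAux
set_option linter.unusedSectionVars false
set_option maxHeartbeats 1000000
variable {E : Type*} [MeasurableSpace E]

lemma condexp_tail (μ : Measure E) [SigmaFinite μ] (f0 f1 : E → E → ℝ≥0)
    (hf0 : Measurable (Function.uncurry f0)) (hf1 : Measurable (Function.uncurry f1))
    (hi0 : ∀ z, ∫⁻ y, (f0 z y : ℝ≥0∞) ∂μ = 1) (hi1 : ∀ z, ∫⁻ y, (f1 z y : ℝ≥0∞) ∂μ = 1)
    {p π : ℝ} (hp : p ∈ Set.Ioo (0 : ℝ) 1) (hπ : π ∈ Set.Ioo (0 : ℝ) 1)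
    (x : E) (n k : ℕ) :
    (fun ω : ℕ × (Fin n → E) =>
        (1 - π) * p ^ (n + k) * (Lfn f0 f1 0 n 0 (extvec n x ω.2) : ℝ) /
          Sfn f0 f1 p π n (extvec n x ω.2))
      =ᵐ[nuMeasure μ f0 f1 p π x n]
      (nuMeasure μ f0 f1 p π x n)[Set.indicator {ω : ℕ × (Fin n → E) | n + k < ω.1}
        (fun _ => (1 : ℝ)) | Ffil n n le_rfl] := by
  haveI := isProbability_nuMeasure μ f0 f1 hf0 hf1 hi0 hi1 hp hπ x n
  set ν := nuMeasure μ f0 f1 p π x n with hν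
  have hc0 : (0:ℝ) ≤ (1 - π) * p ^ (n + k) :=
    mul_nonneg (by linarith [hπ.2]) (pow_nonneg hp.1.le _)
  set G : (Fin n → E) → ℝ := fun xs =>
    (1 - π) * p ^ (n + k) * (Lfn f0 f1 0 n 0 (extvec n x xs) : ℝ) /
      Sfn f0 f1 p π n (extvec n x xs) with hGdef
  have hFeq : Ffil (E := E) n n le_rfl = MeasurableSpace.comap Prod.snd inferInstance := rfl
  have hm : Ffil (E := E) n n le_rfl ≤ (inferInstance : MeasurableSpace (ℕ × (Fin n → E))) := by
    rw [hFeq]; exact measurable_snd.comap_le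
  have hGm : Measurable G := by
    rw [hGdef]
    exact (((measurable_Lfn f0 f1 hf0 hf1 0 n 0 n x).coe_nnreal_real).const_mul _).div
      (measurable_Sfn f0 f1 hf0 hf1 p π n x)
  have hG01 : ∀ xs, 0 ≤ G xs ∧ G xs ≤ 1 := by
    intro xs
    obtain ⟨hS0, hSge⟩ := Sfn_nonneg_terms hp hπ f0 f1 n (extvec n x xs)
    constructor
    · exact div_nonneg (mul_nonneg hc0 (NNReal.coe_nonneg _)) hS0
    · rcases eq_or_lt_of_le hS0 with h | h
      · rw [hGdef]; simp only [← h, div_zero]; exact zero_le_one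
      · rw [hGdef]
        refine (div_le_one h).mpr ?_
        refine le_trans ?_ hSge
        have hpow : p ^ (n + k) ≤ p ^ n :=
          pow_le_pow_of_le_one hp.1.le hp.2.le (by omega)
        have : (1 - π) * p ^ (n + k) ≤ (1 - π) * p ^ n :=
          mul_le_mul_of_nonneg_left hpow (by linarith [hπ.2])
        exact mul_le_mul_of_nonneg_right this (NNReal.coe_nonneg _)
  have hGsnd : Measurable fun ω : ℕ × (Fin n → E) => G ω.2 := hGm.comp measurable_snd
  have hint : Integrable (fun ω : ℕ × (Fin n → E) => G ω.2) ν := by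
    refine Integrable.mono' (integrable_const (1:ℝ)) hGsnd.aestronglyMeasurable
      (ae_of_all _ fun ω => ?_)
    rw [Real.norm_eq_abs, abs_of_nonneg (hG01 _).1]
    exact (hG01 _).2
  have hB : MeasurableSet {ω : ℕ × (Fin n → E) | n + k < ω.1} :=
    measurable_fst measurableSet_Ioi
  have hind_int : Integrable
      (Set.indicator {ω : ℕ × (Fin n → E) | n + k < ω.1} (fun _ => (1:ℝ))) ν :=
    (integrable_const (1:ℝ)).indicator hB
  refine ae_eq_condExp_of_forall_setIntegral_eq hm hind_int
    (fun s _ _ => hint.integrableOn) ?_ ?_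
  · -- set integral equality
    intro s hs _
    rw [hFeq] at hs
    obtain ⟨A, hA, rfl⟩ := hs
    have hsA : MeasurableSet (Prod.snd ⁻¹' A : Set (ℕ × (Fin n → E))) := measurable_snd hA
    set I := ∫⁻ xs in A, (Lfn f0 f1 0 n 0 (extvec n x xs) : ℝ≥0∞)
      ∂(Measure.pi fun _ : Fin n => μ) with hI
    -- RHS
    have hRHS : ∫ ω in Prod.snd ⁻¹' A,
        Set.indicator {ω : ℕ × (Fin n → E) | n + k < ω.1} (fun _ => (1:ℝ)) ω ∂ν
        = (ENNReal.ofReal ((1 - π) * p ^ (n + k)) * I).toReal := by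
      rw [setIntegral_indicator hB, setIntegral_const, smul_eq_mul, mul_one, measureReal_def]
      congr 1
      have hW : MeasurableSet
          ((Prod.snd ⁻¹' A) ∩ {ω : ℕ × (Fin n → E) | n + k < ω.1}) := hsA.inter hB
      rw [hν, nuMeasure_apply μ f0 f1 p π x n hW]
      have hterm : ∀ j : ℕ,
          prior p π j * ∫⁻ xs in {xs : Fin n → E |
              (j, xs) ∈ (Prod.snd ⁻¹' A) ∩ {ω : ℕ × (Fin n → E) | n + k < ω.1}},
            (ellDens f0 f1 n j (extvec n x xs) : ℝ≥0∞) ∂(Measure.pi fun _ : Fin n => μ)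
          = if n + k < j then prior p π j * I else 0 := by
        intro j
        by_cases hj : n + k < j
        · rw [if_pos hj]
          have hset : {xs : Fin n → E |
              (j, xs) ∈ (Prod.snd ⁻¹' A) ∩ {ω : ℕ × (Fin n → E) | n + k < ω.1}} = A := by
            ext xs; simp [hj]
          rw [hset, hI]
          congr 1
          refine lintegral_congr fun xs => ?_
          unfold ellDens
          rw [if_neg (by omega), if_neg (by omega)]
        · rw [if_neg hj]
          have hset : {xs : Fin n → E |
              (j, xs) ∈ (Prod.snd ⁻¹' A) ∩ {ω : ℕ × (Fin n → E) | n + k < ω.1}} = ∅ := by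
            ext xs; simp [hj]
          rw [hset, Measure.restrict_empty, lintegral_zero_measure, mul_zero]
      rw [tsum_congr hterm,
        ← Summable.sum_add_tsum_nat_add' (f := fun j => if n + k < j then prior p π j * I else 0)
          (k := n + k + 1) ENNReal.summable]
      have hzero : ∑ i ∈ Finset.range (n + k + 1),
          (if n + k < i then prior p π i * I else 0) = 0 :=
        Finset.sum_eq_zero fun i hi =>
          if_neg (by simp only [Finset.mem_range] at hi; omega)
      have htail' : ∀ i : ℕ,
          (if n + k < i + (n + k + 1) then prior p π (i + (n + k + 1)) * I else 0)
            = prior p π (i + (n + k + 1)) * I := fun i => if_pos (by omega)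
      rw [hzero, zero_add, tsum_congr htail', ENNReal.tsum_mul_right,
        prior_tail hp hπ (n + k)]
    -- LHS
    have hLHS : ∫ ω in Prod.snd ⁻¹' A, G ω.2 ∂ν
        = (ENNReal.ofReal ((1 - π) * p ^ (n + k)) * I).toReal := by
      have hrw := integral_eq_lintegral_of_nonneg_ae (μ := ν.restrict (Prod.snd ⁻¹' A))
        (f := fun ω : ℕ × (Fin n → E) => G ω.2)
        (ae_of_all _ fun ω => (hG01 ω.2).1) hGsnd.aestronglyMeasurable
      rw [hrw]
      congr 1
      rw [← lintegral_indicator hsA]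
      have hmeasF : Measurable ((Prod.snd ⁻¹' A).indicator
          fun ω : ℕ × (Fin n → E) => ENNReal.ofReal (G ω.2)) :=
        (hGsnd.ennreal_ofReal).indicator hsA
      rw [hν, lintegral_nuMeasure μ f0 f1 hf0 hf1 p π x n _ hmeasF]
      have hstep : ∀ j : ℕ,
          prior p π j * ∫⁻ xs, (ellDens f0 f1 n j (extvec n x xs) : ℝ≥0∞) *
              ((Prod.snd ⁻¹' A).indicator
                (fun ω : ℕ × (Fin n → E) => ENNReal.ofReal (G ω.2)) (j, xs))
              ∂(Measure.pi fun _ : Fin n => μ)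
          = ∫⁻ xs in A, prior p π j * ((ellDens f0 f1 n j (extvec n x xs) : ℝ≥0∞) *
              ENNReal.ofReal (G xs)) ∂(Measure.pi fun _ : Fin n => μ) := by
        intro j
        rw [← lintegral_indicator hA, ← lintegral_const_mul' _ _
          (by rw [prior_eq_ofReal]; exact ENNReal.ofReal_ne_top)]
        refine lintegral_congr fun xs => ?_
        by_cases hxs : xs ∈ A
        · rw [Set.indicator_of_mem hxs, Set.indicator_of_mem (by exact hxs)]
        · rw [Set.indicator_of_notMem hxs, Set.indicator_of_notMem (by exact hxs),
            mul_zero, mul_zero]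
      rw [tsum_congr hstep, ← lintegral_tsum fun j =>
        (show Measurable fun xs => prior p π j * ((ellDens f0 f1 n j (extvec n x xs) : ℝ≥0∞) *
          ENNReal.ofReal (G xs)) from
        (((measurable_ellDens f0 f1 hf0 hf1 n j x).mul hGm.ennreal_ofReal).const_mul
          _)).aemeasurable]
      have hpt : ∀ xs : Fin n → E,
          ∑' j : ℕ, prior p π j * ((ellDens f0 f1 n j (extvec n x xs) : ℝ≥0∞) *
              ENNReal.ofReal (G xs))
            = ENNReal.ofReal ((1 - π) * p ^ (n + k)) *
                (Lfn f0 f1 0 n 0 (extvec n x xs) : ℝ≥0∞) := by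
        intro xs
        obtain ⟨hS0, hSge⟩ := Sfn_nonneg_terms hp hπ f0 f1 n (extvec n x xs)
        calc
          ∑' j : ℕ, prior p π j * ((ellDens f0 f1 n j (extvec n x xs) : ℝ≥0∞) *
              ENNReal.ofReal (G xs))
            = (∑' j : ℕ, prior p π j * (ellDens f0 f1 n j (extvec n x xs) : ℝ≥0∞)) *
                ENNReal.ofReal (G xs) := by
              rw [← ENNReal.tsum_mul_right]
              exact tsum_congr fun j => by rw [mul_assoc]
          _ = ENNReal.ofReal (Sfn f0 f1 p π n (extvec n x xs) * G xs) := by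
              rw [density_eq f0 f1 hp hπ n (extvec n x xs), ← ENNReal.ofReal_mul hS0]
          _ = ENNReal.ofReal ((1 - π) * p ^ (n + k)) *
                (Lfn f0 f1 0 n 0 (extvec n x xs) : ℝ≥0∞) := by
              rw [hGdef]
              rw [Sfn_mul_div hp hπ f0 f1 n (extvec n x xs) _,
                ENNReal.ofReal_mul hc0, ENNReal.ofReal_coe_nnreal]
      rw [lintegral_congr hpt, hI, lintegral_const_mul _
        ((measurable_Lfn f0 f1 hf0 hf1 0 n 0 n x).coe_nnreal_ennreal)]
    rw [hLHS, hRHS]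
  · -- measurability wrt Ffil
    refine StronglyMeasurable.aestronglyMeasurable (Measurable.stronglyMeasurable ?_)
    rw [hFeq]
    exact hGm.comp (measurable_iff_comap_le.mpr le_rfl)

end CPAux

/-- For every `k ≥ 0`, `ν`-a.e.
`ν(θ ≤ n + k | 𝓕_n) = 1 - p^k (1 - Π_n)` where `Π_n = ν(θ ≤ n | 𝓕_n)`; equivalently
`ν(θ > n + k | 𝓕_n) = (1-π) p^{n+k} L₀(x, X₁, …, X_n) / S(x, X₁, …, X_n)` `ν`-a.e. -/
theorem stmt5 {E : Type*} [MeasurableSpace E] (μ : Measure E) [SigmaFinite μ]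
    (f0 f1 : E → E → ℝ≥0) (hf0 : Measurable (Function.uncurry f0))
    (hf1 : Measurable (Function.uncurry f1))
    (hi0 : ∀ z, ∫⁻ y, (f0 z y : ℝ≥0∞) ∂μ = 1) (hi1 : ∀ z, ∫⁻ y, (f1 z y : ℝ≥0∞) ∂μ = 1)
    (p π : ℝ) (hp : p ∈ Set.Ioo (0 : ℝ) 1) (hπ : π ∈ Set.Ioo (0 : ℝ) 1)
    (x : E) (n : ℕ) (hn : 1 ≤ n) (k : ℕ) :
    ((nuMeasure μ f0 f1 p π x n)[Set.indicator {ω : ℕ × (Fin n → E) | ω.1 ≤ n + k}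
          (fun _ => (1 : ℝ)) | Ffil n n le_rfl]
        =ᵐ[nuMeasure μ f0 f1 p π x n] fun ω =>
          1 - p ^ k *
            (1 - ((nuMeasure μ f0 f1 p π x n)[Set.indicator {ω' : ℕ × (Fin n → E) | ω'.1 ≤ n}
              (fun _ => (1 : ℝ)) | Ffil n n le_rfl]) ω)) ∧
      (nuMeasure μ f0 f1 p π x n)[Set.indicator {ω : ℕ × (Fin n → E) | n + k < ω.1}
          (fun _ => (1 : ℝ)) | Ffil n n le_rfl]
        =ᵐ[nuMeasure μ f0 f1 p π x n] fun ω =>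
          (1 - π) * p ^ (n + k) * (Lfn f0 f1 0 n 0 (extvec n x ω.2) : ℝ) /
            Sfn f0 f1 p π n (extvec n x ω.2) := by
  haveI := CPAux.isProbability_nuMeasure μ f0 f1 hf0 hf1 hi0 hi1 hp hπ x n
  have hFeq : Ffil (E := E) n n le_rfl = MeasurableSpace.comap Prod.snd inferInstance := rfl
  have hm : Ffil (E := E) n n le_rfl ≤ (inferInstance : MeasurableSpace (ℕ × (Fin n → E))) := by
    rw [hFeq]; exact measurable_snd.comap_le
  have hmain : ∀ k' : ℕ,
      (fun ω : ℕ × (Fin n → E) =>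
        (1 - π) * p ^ (n + k') * (Lfn f0 f1 0 n 0 (extvec n x ω.2) : ℝ) /
          Sfn f0 f1 p π n (extvec n x ω.2))
      =ᵐ[nuMeasure μ f0 f1 p π x n]
      (nuMeasure μ f0 f1 p π x n)[Set.indicator {ω : ℕ × (Fin n → E) | n + k' < ω.1}
        (fun _ => (1 : ℝ)) | Ffil n n le_rfl] :=
    fun k' => CPAux.condexp_tail μ f0 f1 hf0 hf1 hi0 hi1 hp hπ x n k'
  have hind : ∀ N : ℕ, Set.indicator {ω : ℕ × (Fin n → E) | ω.1 ≤ N} (fun _ => (1:ℝ))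
      = (fun _ => (1:ℝ)) - Set.indicator {ω : ℕ × (Fin n → E) | N < ω.1} (fun _ => (1:ℝ)) := by
    intro N; funext ω
    by_cases h : ω.1 ≤ N
    · simp [Set.indicator_apply, h, Nat.not_lt.mpr h]
    · simp [Set.indicator_apply, h, Nat.not_le.mp h]
  have hint_gt : ∀ N : ℕ, Integrable
      (Set.indicator {ω : ℕ × (Fin n → E) | N < ω.1} (fun _ => (1:ℝ)))
      (nuMeasure μ f0 f1 p π x n) :=
    fun N => (integrable_const 1).indicator (measurable_fst measurableSet_Ioi)
  have hsub : ∀ N : ℕ,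
      (nuMeasure μ f0 f1 p π x n)[Set.indicator {ω : ℕ × (Fin n → E) | ω.1 ≤ N}
        (fun _ => (1 : ℝ)) | Ffil n n le_rfl]
      =ᵐ[nuMeasure μ f0 f1 p π x n] fun ω =>
        1 - ((nuMeasure μ f0 f1 p π x n)[Set.indicator {ω : ℕ × (Fin n → E) | N < ω.1}
          (fun _ => (1 : ℝ)) | Ffil n n le_rfl]) ω := by
    intro N
    rw [hind N]
    refine (condExp_sub (integrable_const 1) (hint_gt N) _).trans ?_
    rw [condExp_const hm]
    exact ae_of_all _ fun ω => rfl
  have h2 : (nuMeasure μ f0 f1 p π x n)[Set.indicator {ω' : ℕ × (Fin n → E) | ω'.1 ≤ n}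
      (fun _ => (1 : ℝ)) | Ffil n n le_rfl]
      =ᵐ[nuMeasure μ f0 f1 p π x n] fun ω =>
        1 - (1 - π) * p ^ n * (Lfn f0 f1 0 n 0 (extvec n x ω.2) : ℝ) /
          Sfn f0 f1 p π n (extvec n x ω.2) := by
    refine (hsub n).trans ?_
    have hmain0 := (hmain 0).symm
    simp only [Nat.add_zero] at hmain0
    filter_upwards [hmain0] with ω hω
    rw [hω]
  constructor
  · refine (hsub (n + k)).trans ?_
    filter_upwards [(hmain k).symm, h2] with ω hω1 hω2
    rw [hω1, hω2]
    ring
  · exact (hmain k).symm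
end

section
/- In the change-point model below, for 0 ≤ l < n, ν-almost everywhere ν(θ > n − l − 1 | 𝓕_n) = (1 − Π_{n−l−1}) · (∑_{k=0}^{l} p^{l−k} q L_{k+1}(X_{n−l−1}, …, X_n) + p^{l+1} L₀(X_{n−l−1}, …, X_n)) / G_{l+1}(X_{n−l−1}, …, X_n, Π_{n−l−1}), where Π_m := ν(θ ≤ m | 𝓕_m). -/
open MeasureTheory Finset
open scoped NNReal ENNReal

namespace Stmt7Aux

open MeasureTheory Finset
open scoped NNReal ENNReal

noncomputable section

variable {E : Type*} [MeasurableSpace E]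

/-- Step kernel: `f1` if the change `j` has already happened before step `r`, else `f0`. -/
def hstep (f0 f1 : E → E → ℝ≥0) (j r : ℕ) : E → E → ℝ≥0 := if j ≤ r then f1 else f0

/-- Density of the first `m` observations given change point `j`. -/
def dens (f0 f1 : E → E → ℝ≥0) (x : E) (m j : ℕ) (xs : Fin m → E) : ℝ≥0∞ :=
  ∏ r ∈ Finset.Icc 1 m, (hstep f0 f1 j r (extvec m x xs (r - 1)) (extvec m x xs r) : ℝ≥0∞)

/-- Restriction of an `n`-vector to the first `m` coordinates. -/
def resv (n m : ℕ) (h : m ≤ n) (xs : Fin n → E) : Fin m → E := fun i => xs (Fin.castLE h i)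

section Combinatorial

variable (f0 f1 : E → E → ℝ≥0) (x : E)

lemma hstep_of_le {j r : ℕ} (h : j ≤ r) : hstep (E := E) f0 f1 j r = f1 := if_pos h

lemma hstep_of_gt {j r : ℕ} (h : r < j) : hstep (E := E) f0 f1 j r = f0 :=
  if_neg (by omega)

lemma extvec_snoc_le {k : ℕ} (y : E) (xs : Fin k → E) {r : ℕ} (hr : r ≤ k) :
    extvec (k + 1) x (Fin.snoc xs y) r = extvec k x xs r := by
  unfold extvec
  rcases Nat.eq_zero_or_pos r with h0 | h1
  · subst h0; simp
  · rw [dif_pos ⟨h1, by omega⟩, dif_pos ⟨h1, hr⟩]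
    have h2 : (⟨r - 1, by omega⟩ : Fin (k + 1)) = Fin.castSucc ⟨r - 1, by omega⟩ := by
      apply Fin.ext; simp
    rw [h2, Fin.snoc_castSucc]

lemma extvec_snoc_top {k : ℕ} (y : E) (xs : Fin k → E) :
    extvec (k + 1) x (Fin.snoc xs y) (k + 1) = y := by
  unfold extvec
  rw [dif_pos ⟨by omega, le_rfl⟩]
  have h2 : (⟨k + 1 - 1, by omega⟩ : Fin (k + 1)) = Fin.last k := by
    apply Fin.ext; simp
  rw [h2, Fin.snoc_last]

lemma extvec_resv {n m : ℕ} (h : m ≤ n) (xs : Fin n → E) {r : ℕ} (hr : r ≤ m) :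
    extvec m x (resv n m h xs) r = extvec n x xs r := by
  unfold extvec resv
  rcases Nat.eq_zero_or_pos r with h0 | h1
  · subst h0; simp
  · rw [dif_pos ⟨h1, hr⟩, dif_pos ⟨h1, by omega⟩]
    congr 1

lemma resv_self (n : ℕ) (xs : Fin n → E) : resv n n le_rfl xs = xs := by
  funext i; rfl

lemma resv_snoc {k m : ℕ} (h : m ≤ k + 1) (hmk : m ≤ k) (xs : Fin k → E) (y : E) :
    resv (k + 1) m h (Fin.snoc xs y) = resv k m hmk xs := by
  funext i
  show (Fin.snoc xs y : Fin (k+1) → E) (Fin.castLE h i) = xs (Fin.castLE hmk i)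
  have h2 : (Fin.castLE h i : Fin (k + 1)) = Fin.castSucc (Fin.castLE hmk i) := by
    apply Fin.ext; simp
  rw [h2, Fin.snoc_castSucc]

lemma prod_hstep_f1 {j a b : ℕ} (hj : ∀ r ∈ Finset.Ioc a b, j ≤ r) (xv : ℕ → E) :
    (∏ r ∈ Finset.Ioc a b, hstep f0 f1 j r (xv (r - 1)) (xv r))
      = ∏ r ∈ Finset.Ioc a b, f1 (xv (r - 1)) (xv r) :=
  Finset.prod_congr rfl fun r hr => by rw [hstep_of_le _ _ (hj r hr)]

lemma prod_hstep_f0 {j a b : ℕ} (hj : ∀ r ∈ Finset.Ioc a b, r < j) (xv : ℕ → E) :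
    (∏ r ∈ Finset.Ioc a b, hstep f0 f1 j r (xv (r - 1)) (xv r))
      = ∏ r ∈ Finset.Ioc a b, f0 (xv (r - 1)) (xv r) :=
  Finset.prod_congr rfl fun r hr => by rw [hstep_of_gt _ _ (hj r hr)]

/-- The change-point conditional density in uniform product form. -/
lemma ellDens_eq_prod (n j : ℕ) (xv : ℕ → E) :
    ellDens f0 f1 n j xv = ∏ r ∈ Finset.Icc 1 n, hstep f0 f1 j r (xv (r - 1)) (xv r) := by
  rw [show Finset.Icc 1 n = Finset.Ioc 0 n from Finset.Icc_add_one_left_eq_Ioc (a := 0) (b := n)]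
  unfold ellDens Lfn
  rcases eq_or_ne j 0 with rfl | hj0
  · rw [if_pos rfl, Nat.sub_self]
    rw [show Finset.Icc 1 0 = (∅ : Finset ℕ) by rfl]
    rw [Finset.prod_empty, one_mul, Finset.Icc_add_one_left_eq_Ioc,
      prod_hstep_f1 f0 f1 (by intro r hr; omega)]
  · rw [if_neg hj0]
    by_cases hjn : j ≤ n
    · rw [if_pos hjn]
      have h1 : n - (n - j + 1) = j - 1 := by omega
      rw [h1, Finset.Icc_add_one_left_eq_Ioc, Finset.Icc_add_one_left_eq_Ioc]
      rw [← Finset.prod_Ioc_consecutive _ (by omega : 0 ≤ j - 1) (by omega : j - 1 ≤ n)]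
      rw [prod_hstep_f0 f0 f1 (by intro r hr; rw [Finset.mem_Ioc] at hr; omega),
        prod_hstep_f1 f0 f1 (by intro r hr; rw [Finset.mem_Ioc] at hr; omega)]
    · rw [if_neg hjn, Nat.sub_zero]
      have h3 : Finset.Icc (n + 1) n = (∅ : Finset ℕ) := by
        apply Finset.Icc_eq_empty; omega
      rw [h3, Finset.prod_empty, mul_one, Finset.Icc_add_one_left_eq_Ioc,
        prod_hstep_f0 f0 f1 (by intro r hr; rw [Finset.mem_Ioc] at hr; omega)]

lemma dens_eq_ellDens (n j : ℕ) (xs : Fin n → E) :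
    dens f0 f1 x n j xs = (ellDens f0 f1 n j (extvec n x xs) : ℝ≥0∞) := by
  rw [ellDens_eq_prod, ENNReal.coe_finset_prod]
  rfl

lemma dens_snoc (k j : ℕ) (xs : Fin k → E) (y : E) :
    dens f0 f1 x (k + 1) j (Fin.snoc xs y)
      = dens f0 f1 x k j xs * (hstep f0 f1 j (k + 1) (extvec k x xs k) y : ℝ≥0∞) := by
  unfold dens
  rw [Finset.prod_Icc_succ_top (by omega : 1 ≤ k + 1)]
  congr 1
  · apply Finset.prod_congr rfl
    intro r hr
    rw [Finset.mem_Icc] at hr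
    rw [extvec_snoc_le x y xs (by omega : r - 1 ≤ k), extvec_snoc_le x y xs hr.2]
  · rw [show k + 1 - 1 = k by omega, extvec_snoc_le x y xs le_rfl, extvec_snoc_top x y xs]

/-- For `j > m` the `m`-step density does not depend on `j` (no change yet). -/
lemma dens_of_gt {m j j' : ℕ} (hj : m < j) (hj' : m < j') (xs : Fin m → E) :
    dens f0 f1 x m j xs = dens f0 f1 x m j' xs := by
  unfold dens
  apply Finset.prod_congr rfl
  intro r hr
  rw [Finset.mem_Icc] at hr
  rw [hstep_of_gt _ _ (by omega), hstep_of_gt _ _ (by omega)]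

/-- Splitting the `n`-step density at `m ≤ n`. -/
lemma dens_split {n m : ℕ} (h : m ≤ n) (j : ℕ) (xs : Fin n → E) :
    dens f0 f1 x n j xs
      = dens f0 f1 x m j (resv n m h xs)
        * ∏ r ∈ Finset.Ioc m n,
            (hstep f0 f1 j r (extvec n x xs (r - 1)) (extvec n x xs r) : ℝ≥0∞) := by
  unfold dens
  rw [show Finset.Icc 1 n = Finset.Ioc 0 n from Finset.Icc_add_one_left_eq_Ioc (a := 0) (b := n),
    show Finset.Icc 1 m = Finset.Ioc 0 m from Finset.Icc_add_one_left_eq_Ioc (a := 0) (b := m),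
    ← Finset.prod_Ioc_consecutive _ (by omega : 0 ≤ m) h]
  congr 1
  apply Finset.prod_congr rfl
  intro r hr
  rw [Finset.mem_Ioc] at hr
  rw [extvec_resv x h xs (by omega : r - 1 ≤ m), extvec_resv x h xs hr.2]

end Combinatorial

section MeasureStuff

variable (μ : Measure E) [SigmaFinite μ] (f0 f1 : E → E → ℝ≥0) (x : E)

lemma measurable_hstep (j r : ℕ) (hf0 : Measurable (Function.uncurry f0))
    (hf1 : Measurable (Function.uncurry f1)) :
    Measurable (Function.uncurry (hstep f0 f1 j r)) := by
  unfold hstep; split_ifs <;> assumption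

lemma measurable_extvec (m r : ℕ) :
    Measurable fun xs : Fin m → E => extvec m x xs r := by
  unfold extvec
  by_cases h : 1 ≤ r ∧ r ≤ m
  · simp only [dif_pos h]; exact measurable_pi_apply _
  · simp only [dif_neg h]; exact measurable_const

lemma measurable_dens (hf0 : Measurable (Function.uncurry f0))
    (hf1 : Measurable (Function.uncurry f1)) (m j : ℕ) :
    Measurable (dens f0 f1 x m j) := by
  apply Finset.measurable_prod
  intro r _
  exact measurable_coe_nnreal_ennreal.comp
    ((measurable_hstep f0 f1 j r hf0 hf1).comp
      ((measurable_extvec x m (r - 1)).prodMk (measurable_extvec x m r)))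

lemma measurable_resv (n m : ℕ) (h : m ≤ n) : Measurable (resv (E := E) n m h) :=
  measurable_pi_lambda _ fun i => measurable_pi_apply _

lemma lintegral_hstep (hi0 : ∀ z, ∫⁻ y, (f0 z y : ℝ≥0∞) ∂μ = 1)
    (hi1 : ∀ z, ∫⁻ y, (f1 z y : ℝ≥0∞) ∂μ = 1) (j r : ℕ) (z : E) :
    ∫⁻ y, (hstep f0 f1 j r z y : ℝ≥0∞) ∂μ = 1 := by
  unfold hstep; split_ifs
  · exact hi1 z
  · exact hi0 z

lemma lintegral_snoc (k : ℕ) (F : (Fin (k + 1) → E) → ℝ≥0∞) (hF : Measurable F) :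
    ∫⁻ xs, F xs ∂(Measure.pi fun _ : Fin (k + 1) => μ)
      = ∫⁻ xs, ∫⁻ y, F (Fin.snoc xs y) ∂μ ∂(Measure.pi fun _ : Fin k => μ) := by
  have hmp := measurePreserving_piFinSuccAbove (fun _ : Fin (k + 1) => μ) (Fin.last k)
  set e := MeasurableEquiv.piFinSuccAbove (fun _ : Fin (k + 1) => E) (Fin.last k) with he
  have hsymm : ∀ (q : E × (Fin k → E)), e.symm q = Fin.snoc q.2 q.1 := by
    intro q
    rw [he]
    simp [MeasurableEquiv.piFinSuccAbove_symm_apply, Fin.insertNth_last, Fin.snocEquiv]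
  have hmeas : Measurable fun q : E × (Fin k → E) => F (Fin.snoc q.2 q.1) := by
    have : (fun q : E × (Fin k → E) => F (Fin.snoc q.2 q.1)) = F ∘ e.symm := by
      funext q; rw [Function.comp_apply, hsymm]
    rw [this]
    exact hF.comp e.symm.measurable
  have h1 : ∫⁻ xs, F xs ∂(Measure.pi fun _ : Fin (k + 1) => μ)
      = ∫⁻ q, F (Fin.snoc q.2 q.1)
          ∂(μ.prod (Measure.pi fun _ : Fin k => μ)) := by
    rw [← hmp.lintegral_comp hmeas]
    apply lintegral_congr
    intro xs
    congr 1
    have := hsymm (e xs)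
    rw [e.symm_apply_apply] at this
    rw [← this]
  rw [h1, lintegral_prod _ hmeas.aemeasurable]
  exact lintegral_lintegral_swap hmeas.aemeasurable

lemma peel (hf0 : Measurable (Function.uncurry f0))
    (hf1 : Measurable (Function.uncurry f1))
    (hi0 : ∀ z, ∫⁻ y, (f0 z y : ℝ≥0∞) ∂μ = 1)
    (hi1 : ∀ z, ∫⁻ y, (f1 z y : ℝ≥0∞) ∂μ = 1) (j : ℕ) :
    ∀ (k m : ℕ) (h : m ≤ k) (Φ : (Fin m → E) → ℝ≥0∞), Measurable Φ →
      ∫⁻ xs, Φ (resv k m h xs) * dens f0 f1 x k j xs ∂(Measure.pi fun _ : Fin k => μ)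
        = ∫⁻ xs, Φ xs * dens f0 f1 x m j xs ∂(Measure.pi fun _ : Fin m => μ) := by
  intro k
  induction k with
  | zero =>
    intro m h Φ hΦ
    obtain rfl : m = 0 := by omega
    apply lintegral_congr
    intro xs
    rw [show resv 0 0 h xs = xs from funext fun i => i.elim0]
  | succ k ih =>
    intro m h Φ hΦ
    rcases Nat.lt_or_ge m (k + 1) with hm | hm
    · have hmk : m ≤ k := by omega
      have hFmeas : Measurable fun xs : Fin (k + 1) → E =>
          Φ (resv (k + 1) m h xs) * dens f0 f1 x (k + 1) j xs :=
        (hΦ.comp (measurable_resv _ _ _)).mul (measurable_dens f0 f1 x hf0 hf1 _ _)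
      rw [lintegral_snoc μ k _ hFmeas]
      have hpt : ∀ (xs : Fin k → E),
          (∫⁻ y, Φ (resv (k + 1) m h (Fin.snoc xs y))
              * dens f0 f1 x (k + 1) j (Fin.snoc xs y) ∂μ)
            = Φ (resv k m hmk xs) * dens f0 f1 x k j xs := by
        intro xs
        have hrw : ∀ y : E, Φ (resv (k + 1) m h (Fin.snoc xs y))
              * dens f0 f1 x (k + 1) j (Fin.snoc xs y)
            = (Φ (resv k m hmk xs) * dens f0 f1 x k j xs)
              * (hstep f0 f1 j (k + 1) (extvec k x xs k) y : ℝ≥0∞) := by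
          intro y
          rw [resv_snoc h hmk xs y, dens_snoc f0 f1 x k j xs y, mul_assoc]
        simp_rw [hrw]
        rw [lintegral_const_mul _ (by
          exact measurable_coe_nnreal_ennreal.comp
            ((measurable_hstep f0 f1 j (k+1) hf0 hf1).comp measurable_prodMk_left))]
        rw [lintegral_hstep μ f0 f1 hi0 hi1 j (k + 1) _, mul_one]
      simp_rw [hpt]
      exact ih m hmk Φ hΦ
    · obtain rfl : m = k + 1 := by omega
      apply lintegral_congr
      intro xs
      rw [resv_self]

end MeasureStuff

section Tsum

lemma tsum_shift (N : ℕ) (f : ℕ → ℝ≥0∞) :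
    (∑' k, if N ≤ k then f k else 0) = ∑' k, f (N + k) := by
  have h := (add_right_injective N).tsum_eq (f := fun k => if N ≤ k then f k else 0)
    (by
      intro k hk
      rw [Function.mem_support] at hk
      have hNk : N ≤ k := by
        by_contra hc
        exact hk (if_neg hc)
      exact ⟨k - N, by show N + (k - N) = k; omega⟩)
  rw [← h]
  exact tsum_congr fun k => if_pos (by omega)

lemma tsum_split (N : ℕ) (f : ℕ → ℝ≥0∞) :
    ∑' k, f k = (∑ k ∈ Finset.range N, f k) + ∑' k, f (N + k) := by
  have hpt : ∀ k, f k = (if k < N then f k else 0) + (if N ≤ k then f k else 0) := by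
    intro k; by_cases h : k < N
    · rw [if_pos h, if_neg (by omega), add_zero]
    · rw [if_neg h, if_pos (by omega), zero_add]
  calc ∑' k, f k = ∑' k, ((if k < N then f k else 0) + (if N ≤ k then f k else 0)) :=
        tsum_congr hpt
    _ = (∑' k, if k < N then f k else 0) + ∑' k, if N ≤ k then f k else 0 :=
        ENNReal.tsum_add
    _ = (∑ k ∈ Finset.range N, f k) + ∑' k, f (N + k) := by
        rw [tsum_shift]
        congr 1
        rw [tsum_eq_sum (s := Finset.range N)
          (fun b hb => if_neg (by simp only [Finset.mem_range] at hb; omega))]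
        exact Finset.sum_congr rfl fun b hb => if_pos (by simpa using hb)

lemma tsum_indicator_le (m₀ : ℕ) (f : ℕ → ℝ≥0∞) :
    (∑' j, Set.indicator {j | j ≤ m₀} f j) = ∑ j ∈ Finset.range (m₀ + 1), f j := by
  rw [tsum_eq_sum (s := Finset.range (m₀ + 1)) (fun b hb => by
    apply Set.indicator_of_notMem
    simp only [Finset.mem_range] at hb
    simp only [Set.mem_setOf_eq, not_le]
    omega)]
  refine Finset.sum_congr rfl fun b hb => ?_
  apply Set.indicator_of_mem
  simp only [Finset.mem_range] at hb
  simp only [Set.mem_setOf_eq]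
  omega

lemma tsum_indicator_gt (m₀ : ℕ) (f : ℕ → ℝ≥0∞) :
    (∑' j, Set.indicator {j | m₀ < j} f j) = ∑' k, f (m₀ + 1 + k) := by
  rw [← tsum_shift (m₀ + 1) f]
  apply tsum_congr
  intro k
  by_cases h : m₀ < k
  · rw [Set.indicator_of_mem (show k ∈ {j | m₀ < j} from h) f, if_pos (by omega)]
  · rw [Set.indicator_of_notMem (show k ∉ {j | m₀ < j} from h) f, if_neg (by omega)]

end Tsum

section Prior

variable {p π : ℝ}

lemma prior_succ (p π : ℝ) (j : ℕ) :
    prior p π (j + 1) = ENNReal.ofReal ((1 - π) * p ^ j * (1 - p)) := by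
  unfold prior
  rw [if_neg (by omega)]
  norm_num

lemma tsum_prior_tail (hp : p ∈ Set.Ioo (0:ℝ) 1) (hπ : π ∈ Set.Ioo (0:ℝ) 1) (m : ℕ) :
    ∑' k, prior p π (m + 1 + k) = ENNReal.ofReal ((1 - π) * p ^ m) := by
  obtain ⟨hp0, hp1⟩ := hp
  obtain ⟨hπ0, hπ1⟩ := hπ
  have h1 : ∀ k : ℕ, prior p π (m + 1 + k)
      = ENNReal.ofReal ((1 - π) * p ^ m * (1 - p)) * ENNReal.ofReal p ^ k := by
    intro k
    have : m + 1 + k = (m + k) + 1 := by omega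
    rw [this, prior_succ, pow_add, ← ENNReal.ofReal_pow hp0.le]
    rw [← ENNReal.ofReal_mul (mul_nonneg (mul_nonneg (by linarith)
      (pow_nonneg hp0.le m)) (by linarith))]
    congr 1
    ring
  simp_rw [h1]
  rw [ENNReal.tsum_mul_left, ENNReal.tsum_geometric]
  have h2 : (1 : ℝ≥0∞) - ENNReal.ofReal p = ENNReal.ofReal (1 - p) := by
    rw [ENNReal.ofReal_sub _ hp0.le, ENNReal.ofReal_one]
  rw [h2]
  rw [show (1 - π) * p ^ m * (1 - p) = ((1 - π) * p ^ m) * (1 - p) by ring,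
    ENNReal.ofReal_mul (mul_nonneg (by linarith) (pow_nonneg hp0.le m)), mul_assoc,
    ENNReal.mul_inv_cancel (by simp [ENNReal.ofReal_eq_zero]; linarith) ENNReal.ofReal_ne_top,
    mul_one]

lemma tsum_prior (hp : p ∈ Set.Ioo (0:ℝ) 1) (hπ : π ∈ Set.Ioo (0:ℝ) 1) :
    ∑' j, prior p π j = 1 := by
  rw [tsum_split 1]
  have h0 : ∀ k, prior p π (1 + k) = prior p π (0 + 1 + k) := by intro k; norm_num
  simp_rw [h0]
  rw [tsum_prior_tail hp hπ 0]
  simp only [Finset.range_one, Finset.sum_singleton]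
  have : prior p π 0 = ENNReal.ofReal π := by unfold prior; rw [if_pos rfl]
  rw [this, pow_zero, mul_one, ← ENNReal.ofReal_add hπ.1.le (by linarith [hπ.2]),
    show π + (1 - π) = 1 by ring, ENNReal.ofReal_one]

end Prior

section Master

variable (μ : Measure E) [SigmaFinite μ] (f0 f1 : E → E → ℝ≥0) (x : E) (p π : ℝ)

/-- The master computation: integrating a `𝓕ₘ`-measurable nonnegative function against `ν`
on the event `{θ ∈ T}`. -/
lemma master (hf0 : Measurable (Function.uncurry f0))
    (hf1 : Measurable (Function.uncurry f1))
    (hi0 : ∀ z, ∫⁻ y, (f0 z y : ℝ≥0∞) ∂μ = 1)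
    (hi1 : ∀ z, ∫⁻ y, (f1 z y : ℝ≥0∞) ∂μ = 1)
    (n m : ℕ) (h : m ≤ n) (T : Set ℕ)
    (Φ : (Fin m → E) → ℝ≥0∞) (hΦ : Measurable Φ) :
    ∫⁻ ω, Set.indicator {ω' : ℕ × (Fin n → E) | ω'.1 ∈ T}
        (fun ω' => Φ (resv n m h ω'.2)) ω ∂(nuMeasure μ f0 f1 p π x n)
      = ∫⁻ xs, Φ xs
          * (∑' j, T.indicator (fun j => prior p π j * dens f0 f1 x m j xs) j)
          ∂(Measure.pi fun _ : Fin m => μ) := by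
  have hTmeas : MeasurableSet {ω' : ℕ × (Fin n → E) | ω'.1 ∈ T} :=
    measurable_fst (MeasurableSet.of_discrete)
  have hFmeas : Measurable fun ω : ℕ × (Fin n → E) =>
      Set.indicator {ω' : ℕ × (Fin n → E) | ω'.1 ∈ T}
        (fun ω' => Φ (resv n m h ω'.2)) ω :=
    Measurable.indicator ((hΦ.comp (measurable_resv n m h)).comp measurable_snd) hTmeas
  have hdmeas : ∀ j, Measurable fun xs : Fin n → E =>
      (ellDens f0 f1 n j (extvec n x xs) : ℝ≥0∞) := by
    intro j
    have : (fun xs : Fin n → E => (ellDens f0 f1 n j (extvec n x xs) : ℝ≥0∞))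
        = dens f0 f1 x n j := by
      funext xs; rw [dens_eq_ellDens]
    rw [this]
    exact measurable_dens f0 f1 x hf0 hf1 n j
  rw [nuMeasure, lintegral_sum_measure]
  have hterm : ∀ j : ℕ,
      ∫⁻ ω, Set.indicator {ω' : ℕ × (Fin n → E) | ω'.1 ∈ T}
          (fun ω' => Φ (resv n m h ω'.2)) ω
        ∂(prior p π j • Measure.map (fun xs => (j, xs))
            ((Measure.pi fun _ : Fin n => μ).withDensity fun xs =>
              (ellDens f0 f1 n j (extvec n x xs) : ℝ≥0∞)))
      = T.indicator (fun j => prior p π j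
          * ∫⁻ xs, Φ xs * dens f0 f1 x m j xs ∂(Measure.pi fun _ : Fin m => μ)) j := by
    intro j
    rw [lintegral_smul_measure, lintegral_map hFmeas measurable_prodMk_left]
    have hg : Measurable fun xs : Fin n → E =>
        Set.indicator {ω' : ℕ × (Fin n → E) | ω'.1 ∈ T}
          (fun ω' => Φ (resv n m h ω'.2)) (j, xs) := hFmeas.comp measurable_prodMk_left
    rw [lintegral_withDensity_eq_lintegral_mul _ (hdmeas j) hg]
    by_cases hj : j ∈ T
    · rw [Set.indicator_of_mem hj]
      congr 1
      have hpt : ∀ xs : Fin n → E,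
          ((fun xs => (ellDens f0 f1 n j (extvec n x xs) : ℝ≥0∞))
            * fun xs => Set.indicator {ω' : ℕ × (Fin n → E) | ω'.1 ∈ T}
                (fun ω' => Φ (resv n m h ω'.2)) (j, xs)) xs
          = Φ (resv n m h xs) * dens f0 f1 x n j xs := by
        intro xs
        simp only [Pi.mul_apply]
        rw [Set.indicator_of_mem (by exact hj), ← dens_eq_ellDens, mul_comm]
      rw [lintegral_congr hpt]
      exact peel μ f0 f1 x hf0 hf1 hi0 hi1 j n m h Φ hΦ
    · rw [Set.indicator_of_notMem hj]
      have hpt : ∀ xs : Fin n → E,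
          ((fun xs => (ellDens f0 f1 n j (extvec n x xs) : ℝ≥0∞))
            * fun xs => Set.indicator {ω' : ℕ × (Fin n → E) | ω'.1 ∈ T}
                (fun ω' => Φ (resv n m h ω'.2)) (j, xs)) xs = 0 := by
        intro xs
        simp only [Pi.mul_apply]
        rw [Set.indicator_of_notMem (by exact hj), mul_zero]
      rw [lintegral_congr hpt, lintegral_zero, smul_zero]
  simp_rw [hterm]
  have hswap : ∀ j : ℕ, T.indicator (fun j => prior p π j
        * ∫⁻ xs, Φ xs * dens f0 f1 x m j xs ∂(Measure.pi fun _ : Fin m => μ)) j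
      = ∫⁻ xs, Φ xs * T.indicator (fun j => prior p π j * dens f0 f1 x m j xs) j
          ∂(Measure.pi fun _ : Fin m => μ) := by
    intro j
    by_cases hj : j ∈ T
    · simp only [Set.indicator_of_mem hj]
      rw [← lintegral_const_mul _ (f := fun xs => Φ xs * dens f0 f1 x m j xs) (hΦ.mul (measurable_dens f0 f1 x hf0 hf1 m j))]
      apply lintegral_congr; intro xs; ring
    · simp only [Set.indicator_of_notMem hj, mul_zero, lintegral_zero]
  simp_rw [hswap]
  rw [← lintegral_tsum (by
    intro j
    by_cases hj : j ∈ T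
    · simp only [Set.indicator_of_mem hj]
      exact (hΦ.mul ((measurable_dens f0 f1 x hf0 hf1 m j).const_mul _)).aemeasurable
    · simp only [Set.indicator_of_notMem hj, mul_zero]
      exact aemeasurable_const)]
  apply lintegral_congr
  intro xs
  rw [ENNReal.tsum_mul_left]

end Master

section Corollaries

/-- Partial (sub-probability) density of the first `m` observations on the event `{θ ∈ T}`. -/
def DT (p π : ℝ) (f0 f1 : E → E → ℝ≥0) (x : E) (m : ℕ) (T : Set ℕ) (xs : Fin m → E) : ℝ≥0∞ :=
  ∑' j, T.indicator (fun j => prior p π j * dens f0 f1 x m j xs) j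

variable (μ : Measure E) [SigmaFinite μ] (f0 f1 : E → E → ℝ≥0) (x : E) (p π : ℝ)

lemma measurable_DT (hf0 : Measurable (Function.uncurry f0))
    (hf1 : Measurable (Function.uncurry f1)) (m : ℕ) (T : Set ℕ) :
    Measurable (DT p π f0 f1 x m T) := by
  apply Measurable.ennreal_tsum
  intro j
  by_cases hj : j ∈ T
  · simp only [Set.indicator_of_mem hj]
    exact (measurable_dens f0 f1 x hf0 hf1 m j).const_mul _
  · simp only [Set.indicator_of_notMem hj]
    exact measurable_const

variable (hf0 : Measurable (Function.uncurry f0)) (hf1 : Measurable (Function.uncurry f1))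
  (hi0 : ∀ z, ∫⁻ y, (f0 z y : ℝ≥0∞) ∂μ = 1) (hi1 : ∀ z, ∫⁻ y, (f1 z y : ℝ≥0∞) ∂μ = 1)

include hf0 hf1 hi0 hi1

lemma nu_set (n m : ℕ) (h : m ≤ n) (T : Set ℕ) (B : Set (Fin m → E)) (hB : MeasurableSet B) :
    nuMeasure μ f0 f1 p π x n
        ({ω' : ℕ × (Fin n → E) | ω'.1 ∈ T}
          ∩ (fun ω : ℕ × (Fin n → E) => resv n m h ω.2) ⁻¹' B)
      = ∫⁻ xs in B, DT p π f0 f1 x m T xs ∂(Measure.pi fun _ : Fin m => μ) := by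
  have hmaster := master μ f0 f1 x p π hf0 hf1 hi0 hi1 n m h T (B.indicator 1)
    (measurable_one.indicator hB)
  have hSmeas : MeasurableSet ({ω' : ℕ × (Fin n → E) | ω'.1 ∈ T}
      ∩ (fun ω : ℕ × (Fin n → E) => resv n m h ω.2) ⁻¹' B) :=
    (measurable_fst (MeasurableSet.of_discrete)).inter
      (((measurable_resv n m h).comp measurable_snd) hB)
  have hL : ∀ ω : ℕ × (Fin n → E),
      Set.indicator {ω' : ℕ × (Fin n → E) | ω'.1 ∈ T}
          (fun ω' => B.indicator (1 : (Fin m → E) → ℝ≥0∞) (resv n m h ω'.2)) ω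
        = Set.indicator ({ω' : ℕ × (Fin n → E) | ω'.1 ∈ T}
            ∩ (fun ω : ℕ × (Fin n → E) => resv n m h ω.2) ⁻¹' B)
            (1 : (ℕ × (Fin n → E)) → ℝ≥0∞) ω := by
    intro ω
    by_cases h1 : ω ∈ {ω' : ℕ × (Fin n → E) | ω'.1 ∈ T} <;>
      by_cases h2 : resv n m h ω.2 ∈ B <;>
        simp [Set.indicator_apply, Set.mem_inter_iff, Set.mem_preimage, h1, h2]
  rw [← lintegral_indicator_one hSmeas, ← lintegral_congr hL, hmaster]
  have hR : ∀ xs : Fin m → E,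
      B.indicator 1 xs * DT p π f0 f1 x m T xs
        = B.indicator (DT p π f0 f1 x m T) xs := by
    intro xs
    by_cases hx : xs ∈ B
    · rw [Set.indicator_of_mem hx, Set.indicator_of_mem hx]
      simp
    · rw [Set.indicator_of_notMem hx, Set.indicator_of_notMem hx, zero_mul]
  rw [show (∫⁻ xs, B.indicator 1 xs
        * (∑' j, T.indicator (fun j => prior p π j * dens f0 f1 x m j xs) j)
        ∂(Measure.pi fun _ : Fin m => μ))
      = ∫⁻ xs, B.indicator (DT p π f0 f1 x m T) xs ∂(Measure.pi fun _ : Fin m => μ)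
    from lintegral_congr hR]
  exact lintegral_indicator hB _

lemma lint_proj (n m : ℕ) (h : m ≤ n) (B : Set (Fin m → E)) (hB : MeasurableSet B)
    (R : (Fin m → E) → ℝ≥0∞) (hR : Measurable R) :
    ∫⁻ ω in (fun ω : ℕ × (Fin n → E) => resv n m h ω.2) ⁻¹' B, R (resv n m h ω.2)
        ∂(nuMeasure μ f0 f1 p π x n)
      = ∫⁻ xs in B, R xs * DT p π f0 f1 x m Set.univ xs
          ∂(Measure.pi fun _ : Fin m => μ) := by
  have hmaster := master μ f0 f1 x p π hf0 hf1 hi0 hi1 n m h Set.univ (B.indicator R)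
    (hR.indicator hB)
  have hPmeas : MeasurableSet ((fun ω : ℕ × (Fin n → E) => resv n m h ω.2) ⁻¹' B) :=
    ((measurable_resv n m h).comp measurable_snd) hB
  have hL : ∀ ω : ℕ × (Fin n → E),
      Set.indicator {ω' : ℕ × (Fin n → E) | ω'.1 ∈ Set.univ}
          (fun ω' => B.indicator R (resv n m h ω'.2)) ω
        = Set.indicator ((fun ω : ℕ × (Fin n → E) => resv n m h ω.2) ⁻¹' B)
            (fun ω' => R (resv n m h ω'.2)) ω := by
    intro ω
    simp only [Set.indicator_apply, Set.mem_setOf_eq, Set.mem_univ, if_true, Set.mem_preimage]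
    by_cases h2 : resv n m h ω.2 ∈ B <;> simp [h2]
  rw [← lintegral_indicator hPmeas, ← lintegral_congr hL, hmaster]
  have hR2 : ∀ xs : Fin m → E,
      B.indicator R xs
          * (∑' j, Set.indicator Set.univ
              (fun j => prior p π j * dens f0 f1 x m j xs) j)
        = B.indicator (fun xs => R xs * DT p π f0 f1 x m Set.univ xs) xs := by
    intro xs
    by_cases hx : xs ∈ B
    · rw [Set.indicator_of_mem hx, Set.indicator_of_mem hx]
      rfl
    · rw [Set.indicator_of_notMem hx, Set.indicator_of_notMem hx, zero_mul]
  rw [lintegral_congr hR2]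
  exact lintegral_indicator hB _

lemma lintegral_dens_one (m j : ℕ) :
    ∫⁻ xs, dens f0 f1 x m j xs ∂(Measure.pi fun _ : Fin m => μ) = 1 := by
  have hpeel := peel μ f0 f1 x hf0 hf1 hi0 hi1 j m 0 (Nat.zero_le m)
    (fun _ => 1) measurable_const
  simp only [one_mul] at hpeel
  rw [hpeel]
  have hd0 : ∀ xs : Fin 0 → E, dens f0 f1 x 0 j xs = 1 := by
    intro xs
    unfold dens
    rw [show Finset.Icc 1 0 = (∅ : Finset ℕ) from rfl, Finset.prod_empty]
  simp_rw [hd0]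
  rw [lintegral_one, Measure.pi_univ]
  simp

lemma lintegral_DT_univ (hp : p ∈ Set.Ioo (0:ℝ) 1) (hπ : π ∈ Set.Ioo (0:ℝ) 1) (m : ℕ) :
    ∫⁻ xs, DT p π f0 f1 x m Set.univ xs ∂(Measure.pi fun _ : Fin m => μ) = 1 := by
  unfold DT
  simp only [Set.indicator_univ]
  rw [lintegral_tsum
    (fun j => ((measurable_dens f0 f1 x hf0 hf1 m j).const_mul _).aemeasurable)]
  have hterm : ∀ j : ℕ, ∫⁻ xs, prior p π j * dens f0 f1 x m j xs
      ∂(Measure.pi fun _ : Fin m => μ) = prior p π j := by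
    intro j
    rw [lintegral_const_mul _ (measurable_dens f0 f1 x hf0 hf1 m j),
      lintegral_dens_one μ f0 f1 x hf0 hf1 hi0 hi1 m j, mul_one]
  simp_rw [hterm]
  exact tsum_prior hp hπ

lemma nu_prob (hp : p ∈ Set.Ioo (0:ℝ) 1) (hπ : π ∈ Set.Ioo (0:ℝ) 1) (n : ℕ) :
    IsProbabilityMeasure (nuMeasure μ f0 f1 p π x n) := by
  constructor
  have hset := nu_set μ f0 f1 x p π hf0 hf1 hi0 hi1 n n le_rfl Set.univ Set.univ
    MeasurableSet.univ
  have hS : ({ω' : ℕ × (Fin n → E) | ω'.1 ∈ Set.univ}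
      ∩ (fun ω : ℕ × (Fin n → E) => resv n n le_rfl ω.2) ⁻¹' Set.univ) = Set.univ := by
    simp
  rw [hS] at hset
  rw [hset, Measure.restrict_univ, lintegral_DT_univ μ f0 f1 x p π hf0 hf1 hi0 hi1 hp hπ n]

lemma ae_DT_good (hp : p ∈ Set.Ioo (0:ℝ) 1) (hπ : π ∈ Set.Ioo (0:ℝ) 1)
    (n m : ℕ) (h : m ≤ n) :
    ∀ᵐ ω ∂(nuMeasure μ f0 f1 p π x n),
      DT p π f0 f1 x m Set.univ (resv n m h ω.2) ≠ 0
        ∧ DT p π f0 f1 x m Set.univ (resv n m h ω.2) ≠ ∞ := by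
  have hDm := measurable_DT (p := p) (π := π) (f0 := f0) (f1 := f1) (x := x) hf0 hf1 m Set.univ
  have hzero : nuMeasure μ f0 f1 p π x n
      ((fun ω : ℕ × (Fin n → E) => resv n m h ω.2) ⁻¹'
        {xs | DT p π f0 f1 x m Set.univ xs = 0}) = 0 := by
    have h0meas : MeasurableSet {xs : Fin m → E | DT p π f0 f1 x m Set.univ xs = 0} :=
      hDm (measurableSet_singleton 0)
    have := nu_set μ f0 f1 x p π hf0 hf1 hi0 hi1 n m h Set.univ _ h0meas
    simp only [Set.mem_univ, Set.setOf_true, Set.univ_inter] at this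
    rw [this]
    have : ∫⁻ xs in {xs : Fin m → E | DT p π f0 f1 x m Set.univ xs = 0},
        DT p π f0 f1 x m Set.univ xs ∂(Measure.pi fun _ : Fin m => μ)
      = ∫⁻ _ in {xs : Fin m → E | DT p π f0 f1 x m Set.univ xs = 0},
          (0 : ℝ≥0∞) ∂(Measure.pi fun _ : Fin m => μ) := by
      apply setLIntegral_congr_fun h0meas
      exact fun xs hxs => hxs
    rw [this, lintegral_zero]
  have htop : nuMeasure μ f0 f1 p π x n
      ((fun ω : ℕ × (Fin n → E) => resv n m h ω.2) ⁻¹'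
        {xs | DT p π f0 f1 x m Set.univ xs = ∞}) = 0 := by
    have htmeas : MeasurableSet {xs : Fin m → E | DT p π f0 f1 x m Set.univ xs = ∞} :=
      hDm (measurableSet_singleton ∞)
    have := nu_set μ f0 f1 x p π hf0 hf1 hi0 hi1 n m h Set.univ _ htmeas
    simp only [Set.mem_univ, Set.setOf_true, Set.univ_inter] at this
    rw [this]
    have hnull : (Measure.pi fun _ : Fin m => μ)
        {xs | DT p π f0 f1 x m Set.univ xs = ∞} = 0 := by
      have hae := ae_lt_top hDm (by
        rw [lintegral_DT_univ μ f0 f1 x p π hf0 hf1 hi0 hi1 hp hπ m]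
        exact ENNReal.one_ne_top)
      rw [ae_iff] at hae
      refine le_antisymm (le_trans (measure_mono ?_) hae.le) zero_le
      intro xs hxs
      simp only [Set.mem_setOf_eq] at *
      simp [hxs]
    exact setLIntegral_measure_zero _ _ hnull
  rw [ae_iff]
  have hsub : {ω : ℕ × (Fin n → E) | ¬(DT p π f0 f1 x m Set.univ (resv n m h ω.2) ≠ 0
        ∧ DT p π f0 f1 x m Set.univ (resv n m h ω.2) ≠ ∞)}
      ⊆ ((fun ω : ℕ × (Fin n → E) => resv n m h ω.2) ⁻¹'
          {xs | DT p π f0 f1 x m Set.univ xs = 0})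
        ∪ ((fun ω : ℕ × (Fin n → E) => resv n m h ω.2) ⁻¹'
            {xs | DT p π f0 f1 x m Set.univ xs = ∞}) := by
    intro ω hω
    simp only [Set.mem_setOf_eq, not_and_or, not_not] at hω
    rcases hω with h1 | h1
    · exact Or.inl h1
    · exact Or.inr h1
  exact le_antisymm (le_trans (measure_mono hsub)
    (le_of_eq (measure_union_null hzero htop))) zero_le

end Corollaries

section Condexp

lemma ffil_le (n m : ℕ) (h : m ≤ n) :
    Ffil (E := E) n m h ≤ (inferInstance : MeasurableSpace (ℕ × (Fin n → E))) := by
  have hmeas : Measurable fun ω : ℕ × (Fin n → E) => fun i : Fin m => ω.2 (Fin.castLE h i) :=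
    measurable_pi_lambda _ fun i => (measurable_pi_apply _).comp measurable_snd
  exact hmeas.comap_le

variable (μ : Measure E) [SigmaFinite μ] (f0 f1 : E → E → ℝ≥0) (x : E) (p π : ℝ)
variable (hf0 : Measurable (Function.uncurry f0)) (hf1 : Measurable (Function.uncurry f1))
  (hi0 : ∀ z, ∫⁻ y, (f0 z y : ℝ≥0∞) ∂μ = 1) (hi1 : ∀ z, ∫⁻ y, (f1 z y : ℝ≥0∞) ∂μ = 1)

include hf0 hf1 hi0 hi1

lemma condexp_eq_ratio (hp : p ∈ Set.Ioo (0:ℝ) 1) (hπ : π ∈ Set.Ioo (0:ℝ) 1)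
    (n m : ℕ) (h : m ≤ n) (T : Set ℕ) :
    (fun ω : ℕ × (Fin n → E) =>
        (DT p π f0 f1 x m T (resv n m h ω.2)
          / DT p π f0 f1 x m Set.univ (resv n m h ω.2)).toReal)
      =ᵐ[nuMeasure μ f0 f1 p π x n]
        (nuMeasure μ f0 f1 p π x n)[Set.indicator {ω' : ℕ × (Fin n → E) | ω'.1 ∈ T}
          (fun _ => (1:ℝ)) | Ffil n m h] := by
  haveI := nu_prob μ f0 f1 x p π hf0 hf1 hi0 hi1 hp hπ n
  set ν := nuMeasure μ f0 f1 p π x n with hν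
  set proj : (ℕ × (Fin n → E)) → (Fin m → E) := fun ω => resv n m h ω.2 with hprojdef
  have hprojmeas : Measurable proj := (measurable_resv n m h).comp measurable_snd
  have hratio_le : ∀ xs : Fin m → E,
      DT p π f0 f1 x m T xs ≤ DT p π f0 f1 x m Set.univ xs := by
    intro xs
    apply ENNReal.tsum_le_tsum
    intro j
    rw [Set.indicator_univ]
    exact Set.indicator_apply_le (fun _ => le_rfl)
  set G : (Fin m → E) → ℝ≥0∞ :=
    fun xs => DT p π f0 f1 x m T xs / DT p π f0 f1 x m Set.univ xs with hGdef
  have hGmeas : Measurable G :=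
    (measurable_DT (p := p) (π := π) (f0 := f0) (f1 := f1) (x := x) hf0 hf1 m T).div
      (measurable_DT (p := p) (π := π) (f0 := f0) (f1 := f1) (x := x) hf0 hf1 m Set.univ)
  have hGle : ∀ xs, G xs ≤ 1 := fun xs =>
    ENNReal.div_le_of_le_mul (by rw [one_mul]; exact hratio_le xs)
  have hGlt : ∀ xs, G xs < ∞ := fun xs => lt_of_le_of_lt (hGle xs) ENNReal.one_lt_top
  have hm := ffil_le (E := E) n m h
  have hAmeas : MeasurableSet {ω' : ℕ × (Fin n → E) | ω'.1 ∈ T} :=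
    measurable_fst MeasurableSet.of_discrete
  have hcomap : Ffil (E := E) n m h = MeasurableSpace.comap proj inferInstance := rfl
  have hgmeas : Measurable fun ω : ℕ × (Fin n → E) => (G (proj ω)).toReal :=
    (ENNReal.measurable_toReal.comp hGmeas).comp hprojmeas
  have hbound : ∀ ω : ℕ × (Fin n → E), ‖(G (proj ω)).toReal‖ ≤ 1 := by
    intro ω
    rw [Real.norm_eq_abs, abs_of_nonneg ENNReal.toReal_nonneg]
    calc (G (proj ω)).toReal ≤ (1 : ℝ≥0∞).toReal :=
          ENNReal.toReal_mono ENNReal.one_ne_top (hGle _)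
      _ = 1 := ENNReal.toReal_one
  have haeD : ∀ᵐ xs ∂(Measure.pi fun _ : Fin m => μ),
      DT p π f0 f1 x m Set.univ xs < ∞ :=
    ae_lt_top (measurable_DT (p := p) (π := π) (f0 := f0) (f1 := f1) (x := x) hf0 hf1 m Set.univ)
      (by rw [lintegral_DT_univ μ f0 f1 x p π hf0 hf1 hi0 hi1 hp hπ m]; exact ENNReal.one_ne_top)
  refine ae_eq_condExp_of_forall_setIntegral_eq hm
    ((integrable_const (1:ℝ)).indicator hAmeas) ?_ ?_ ?_
  · -- integrable on finite-measure sets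
    intro s _ _
    apply Integrable.integrableOn
    refine Integrable.mono' (integrable_const (1:ℝ)) hgmeas.aestronglyMeasurable ?_
    exact Filter.Eventually.of_forall hbound
  · -- set integrals agree
    intro s hs hνs
    rw [hcomap] at hs
    obtain ⟨B, hB, rfl⟩ := hs
    have hint1 : ∫ ω in proj ⁻¹' B, Set.indicator {ω' : ℕ × (Fin n → E) | ω'.1 ∈ T}
        (fun _ => (1:ℝ)) ω ∂ν = (ν ({ω' : ℕ × (Fin n → E) | ω'.1 ∈ T} ∩ proj ⁻¹' B)).toReal := by
      rw [setIntegral_indicator hAmeas, setIntegral_const, smul_eq_mul, mul_one,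
        Set.inter_comm]
      rfl
    rw [hint1]
    have hint2 : ∫ ω in proj ⁻¹' B, (G (proj ω)).toReal ∂ν
        = (∫⁻ ω in proj ⁻¹' B, G (proj ω) ∂ν).toReal := by
      apply integral_toReal
      · exact (hGmeas.comp hprojmeas).aemeasurable.restrict
      · exact Filter.Eventually.of_forall fun ω => hGlt _
    rw [hint2]
    congr 1
    rw [lint_proj μ f0 f1 x p π hf0 hf1 hi0 hi1 n m h B hB G hGmeas]
    rw [nu_set μ f0 f1 x p π hf0 hf1 hi0 hi1 n m h T B hB]
    apply setLIntegral_congr_fun_ae hB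
    refine haeD.mono fun xs hxs _ => ?_
    rcases eq_or_ne (DT p π f0 f1 x m Set.univ xs) 0 with h0 | h0
    · have hT0 : DT p π f0 f1 x m T xs = 0 :=
        le_antisymm (h0 ▸ hratio_le xs) zero_le
      rw [hGdef]
      simp [h0, hT0]
    · rw [hGdef]
      exact ENNReal.div_mul_cancel h0 hxs.ne
  · -- strongly measurable w.r.t. Ffil
    apply MeasureTheory.StronglyMeasurable.aestronglyMeasurable
    apply Measurable.stronglyMeasurable
    rw [hcomap]
    exact (ENNReal.measurable_toReal.comp hGmeas).comp (comap_measurable proj)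

end Condexp

section Decomp

variable (f0 f1 : E → E → ℝ≥0) (x : E) (p π : ℝ)

/-- The segment product over steps `m₀+1, …, n`. -/
def segN (f0 f1 : E → E → ℝ≥0) (m₀ n j : ℕ) (xv : ℕ → E) : ℝ≥0 :=
  ∏ r ∈ Finset.Ioc m₀ n, hstep f0 f1 j r (xv (r - 1)) (xv r)

lemma dens_split' {n m₀ : ℕ} (h : m₀ ≤ n) (j : ℕ) (xs : Fin n → E) :
    dens f0 f1 x n j xs
      = dens f0 f1 x m₀ j (resv n m₀ h xs)
        * (segN f0 f1 m₀ n j (extvec n x xs) : ℝ≥0∞) := by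
  rw [dens_split f0 f1 x h j xs]
  congr 1
  rw [segN, ENNReal.coe_finset_prod]

lemma segN_low {n m₀ l j : ℕ} (hn : n = m₀ + l + 1) (hj : j ≤ m₀) (xv : ℕ → E) :
    segN f0 f1 m₀ n j xv = Lfn f0 f1 m₀ n (l + 1) xv := by
  unfold segN Lfn
  have h1 : n - (l + 1) = m₀ := by omega
  rw [h1, show Finset.Icc (m₀ + 1) m₀ = (∅ : Finset ℕ) from Finset.Icc_eq_empty (by omega),
    Finset.prod_empty, one_mul, Finset.Icc_add_one_left_eq_Ioc]
  exact prod_hstep_f1 f0 f1 (fun r hr => by rw [Finset.mem_Ioc] at hr; omega) xv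

lemma segN_mid {n m₀ j : ℕ} (h : m₀ ≤ n) (hj1 : m₀ < j) (hj2 : j ≤ n) (xv : ℕ → E) :
    segN f0 f1 m₀ n j xv = Lfn f0 f1 m₀ n (n - j + 1) xv := by
  unfold segN Lfn
  have h1 : n - (n - j + 1) = j - 1 := by omega
  rw [h1, Finset.Icc_add_one_left_eq_Ioc, Finset.Icc_add_one_left_eq_Ioc,
    ← Finset.prod_Ioc_consecutive _ (show m₀ ≤ j - 1 by omega) (show j - 1 ≤ n by omega),
    prod_hstep_f0 f0 f1 (fun r hr => by rw [Finset.mem_Ioc] at hr; omega) xv,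
    prod_hstep_f1 f0 f1 (fun r hr => by rw [Finset.mem_Ioc] at hr; omega) xv]

lemma segN_hi {n m₀ j : ℕ} (h : m₀ ≤ n) (hj : n < j) (xv : ℕ → E) :
    segN f0 f1 m₀ n j xv = Lfn f0 f1 m₀ n 0 xv := by
  unfold segN Lfn
  rw [Nat.sub_zero, show Finset.Icc (n + 1) n = (∅ : Finset ℕ) from Finset.Icc_eq_empty (by omega),
    Finset.prod_empty, mul_one, Finset.Icc_add_one_left_eq_Ioc]
  exact prod_hstep_f0 f0 f1 (fun r hr => by rw [Finset.mem_Ioc] at hr; omega) xv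

lemma DT_univ_split_level (hp : p ∈ Set.Ioo (0:ℝ) 1) (hπ : π ∈ Set.Ioo (0:ℝ) 1)
    (m₀ : ℕ) (xs' : Fin m₀ → E) :
    DT p π f0 f1 x m₀ Set.univ xs'
      = DT p π f0 f1 x m₀ {j | j ≤ m₀} xs'
        + ENNReal.ofReal ((1 - π) * p ^ m₀) * dens f0 f1 x m₀ (m₀ + 1) xs' := by
  unfold DT
  simp only [Set.indicator_univ]
  rw [tsum_split (m₀ + 1) (fun j => prior p π j * dens f0 f1 x m₀ j xs'),
    tsum_indicator_le]
  congr 1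
  have hterm : ∀ k : ℕ, prior p π (m₀ + 1 + k) * dens f0 f1 x m₀ (m₀ + 1 + k) xs'
      = prior p π (m₀ + 1 + k) * dens f0 f1 x m₀ (m₀ + 1) xs' := by
    intro k
    rw [dens_of_gt f0 f1 x (show m₀ < m₀ + 1 + k by omega) (show m₀ < m₀ + 1 by omega) xs']
  simp_rw [hterm]
  rw [ENNReal.tsum_mul_right, tsum_prior_tail hp hπ m₀]

lemma DT_le_split {n m₀ l : ℕ} (hn : n = m₀ + l + 1) (h : m₀ ≤ n) (xs : Fin n → E) :
    DT p π f0 f1 x n {j | j ≤ m₀} xs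
      = DT p π f0 f1 x m₀ {j | j ≤ m₀} (resv n m₀ h xs)
          * (Lfn f0 f1 m₀ n (l + 1) (extvec n x xs) : ℝ≥0∞) := by
  unfold DT
  rw [tsum_indicator_le, tsum_indicator_le, Finset.sum_mul]
  apply Finset.sum_congr rfl
  intro j hj
  rw [Finset.mem_range] at hj
  rw [dens_split' f0 f1 x h j xs,
    segN_low f0 f1 hn (show j ≤ m₀ by omega) (extvec n x xs), mul_assoc]

lemma DT_gt_eq (hp : p ∈ Set.Ioo (0:ℝ) 1) (hπ : π ∈ Set.Ioo (0:ℝ) 1)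
    {n m₀ l : ℕ} (hn : n = m₀ + l + 1) (h : m₀ ≤ n) (xs : Fin n → E) :
    DT p π f0 f1 x n {j | m₀ < j} xs
      = (ENNReal.ofReal ((1 - π) * p ^ m₀) * dens f0 f1 x m₀ (m₀ + 1) (resv n m₀ h xs))
          * ((∑ k ∈ Finset.range (l + 1),
                ENNReal.ofReal (p ^ (l - k) * (1 - p))
                  * (Lfn f0 f1 m₀ n (k + 1) (extvec n x xs) : ℝ≥0∞))
              + ENNReal.ofReal (p ^ (l + 1))
                  * (Lfn f0 f1 m₀ n 0 (extvec n x xs) : ℝ≥0∞)) := by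
  obtain ⟨hp0, hp1⟩ := hp
  obtain ⟨hπ0, hπ1⟩ := hπ
  unfold DT
  rw [tsum_indicator_gt]
  have hterm : ∀ k, prior p π (m₀ + 1 + k) * dens f0 f1 x n (m₀ + 1 + k) xs
      = dens f0 f1 x m₀ (m₀ + 1) (resv n m₀ h xs)
        * (prior p π (m₀ + 1 + k)
            * (segN f0 f1 m₀ n (m₀ + 1 + k) (extvec n x xs) : ℝ≥0∞)) := by
    intro k
    rw [dens_split' f0 f1 x h _ xs,
      dens_of_gt f0 f1 x (show m₀ < m₀ + 1 + k by omega) (show m₀ < m₀ + 1 by omega)]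
    ring
  simp_rw [hterm]
  rw [ENNReal.tsum_mul_left]
  set F : ℕ → ℝ≥0∞ := fun k => prior p π (m₀ + 1 + k)
      * (segN f0 f1 m₀ n (m₀ + 1 + k) (extvec n x xs) : ℝ≥0∞) with hF
  rw [tsum_split (l + 1) F]
  have hfin : ∑ k ∈ Finset.range (l + 1), F k
      = ENNReal.ofReal ((1 - π) * p ^ m₀)
          * ∑ k ∈ Finset.range (l + 1), ENNReal.ofReal (p ^ (l - k) * (1 - p))
              * (Lfn f0 f1 m₀ n (k + 1) (extvec n x xs) : ℝ≥0∞) := by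
    rw [← Finset.sum_range_reflect F (l + 1), Finset.mul_sum]
    apply Finset.sum_congr rfl
    intro j hj
    rw [Finset.mem_range] at hj
    have e1 : l + 1 - 1 - j = l - j := by omega
    rw [hF]
    simp only []
    rw [e1]
    rw [segN_mid f0 f1 h (show m₀ < m₀ + 1 + (l - j) by omega)
      (show m₀ + 1 + (l - j) ≤ n by omega) (extvec n x xs)]
    have e3 : n - (m₀ + 1 + (l - j)) + 1 = j + 1 := by omega
    rw [e3]
    have e2 : m₀ + 1 + (l - j) = (m₀ + (l - j)) + 1 := by omega
    rw [e2, prior_succ, pow_add,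
      show (1 - π) * (p ^ m₀ * p ^ (l - j)) * (1 - p)
        = ((1 - π) * p ^ m₀) * (p ^ (l - j) * (1 - p)) by ring,
      ENNReal.ofReal_mul (mul_nonneg (by linarith) (pow_nonneg hp0.le _)), mul_assoc]
  have htail : (∑' k, F (l + 1 + k))
      = ENNReal.ofReal ((1 - π) * p ^ m₀)
          * (ENNReal.ofReal (p ^ (l + 1))
              * (Lfn f0 f1 m₀ n 0 (extvec n x xs) : ℝ≥0∞)) := by
    have hterm2 : ∀ k, F (l + 1 + k)
        = prior p π (n + 1 + k) * (Lfn f0 f1 m₀ n 0 (extvec n x xs) : ℝ≥0∞) := by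
      intro k
      rw [hF]
      simp only []
      have e4 : m₀ + 1 + (l + 1 + k) = n + 1 + k := by omega
      rw [e4, segN_hi f0 f1 h (show n < n + 1 + k by omega) (extvec n x xs)]
    simp_rw [hterm2]
    rw [ENNReal.tsum_mul_right, tsum_prior_tail ⟨hp0, hp1⟩ ⟨hπ0, hπ1⟩ n,
      show (1 - π) * p ^ n = ((1 - π) * p ^ m₀) * p ^ (l + 1) by
        rw [hn, pow_add]; ring,
      ENNReal.ofReal_mul (mul_nonneg (by linarith) (pow_nonneg hp0.le _)), mul_assoc]
  rw [hfin, htail]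
  ring


lemma DT_split_le_gt (m m₀ : ℕ) (xs : Fin m → E) :
    DT p π f0 f1 x m Set.univ xs
      = DT p π f0 f1 x m {j | j ≤ m₀} xs + DT p π f0 f1 x m {j | m₀ < j} xs := by
  unfold DT
  rw [← ENNReal.tsum_add]
  apply tsum_congr
  intro j
  by_cases hj : j ≤ m₀
  · rw [Set.indicator_univ, Set.indicator_of_mem (show j ∈ {j | j ≤ m₀} from hj),
      Set.indicator_of_notMem (show j ∉ {j | m₀ < j} by
        simp only [Set.mem_setOf_eq, not_lt]; omega), add_zero]
  · rw [Set.indicator_univ, Set.indicator_of_notMem (show j ∉ {j | j ≤ m₀} from hj),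
      Set.indicator_of_mem (show j ∈ {j | m₀ < j} by
        simp only [Set.mem_setOf_eq]; omega), zero_add]

end Decomp






end


section FinalAlgebra

lemma final_identity (a b L S : ℝ≥0∞) (Sreal : ℝ) (G : ℝ → ℝ)
    (ha : a ≠ ⊤) (hb : b ≠ ⊤) (hL : L ≠ ⊤) (hS : S ≠ ⊤) (hd0 : a + b ≠ 0)
    (hSreal : S.toReal = Sreal)
    (hG : G ((a / (a + b)).toReal)
      = (a / (a + b)).toReal * L.toReal + (1 - (a / (a + b)).toReal) * Sreal) :
    ((b * S) / (a * L + b * S)).toReal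
      = (1 - (a / (a + b)).toReal) * Sreal / G ((a / (a + b)).toReal) := by
  have hrat : (a / (a + b)).toReal = a.toReal / (a.toReal + b.toReal) := by
    rw [ENNReal.toReal_div, ENNReal.toReal_add ha hb]
  have hLHS : ((b * S) / (a * L + b * S)).toReal
      = b.toReal * S.toReal / (a.toReal * L.toReal + b.toReal * S.toReal) := by
    rw [ENNReal.toReal_div, ENNReal.toReal_add (ENNReal.mul_ne_top ha hL)
      (ENNReal.mul_ne_top hb hS), ENNReal.toReal_mul, ENNReal.toReal_mul]
  rw [hLHS, hG, hrat, ← hSreal]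
  have hA0 : (0:ℝ) ≤ a.toReal := ENNReal.toReal_nonneg
  have hB0 : (0:ℝ) ≤ b.toReal := ENNReal.toReal_nonneg
  have hLr0 : (0:ℝ) ≤ L.toReal := ENNReal.toReal_nonneg
  have hSr0 : (0:ℝ) ≤ S.toReal := ENNReal.toReal_nonneg
  have hABpos : 0 < a.toReal + b.toReal := by
    rw [← ENNReal.toReal_add ha hb]
    exact ENNReal.toReal_pos hd0 (ENNReal.add_ne_top.mpr ⟨ha, hb⟩)
  have hABne : a.toReal + b.toReal ≠ 0 := ne_of_gt hABpos
  generalize a.toReal = A at *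
  generalize b.toReal = B at *
  generalize L.toReal = Lr at *
  generalize S.toReal = Sr at *
  have h1a : 1 - A / (A + B) = B / (A + B) := by field_simp; ring
  have hden : A / (A + B) * Lr + (1 - A / (A + B)) * Sr = (A * Lr + B * Sr) / (A + B) := by
    rw [h1a]
    field_simp
    try ring
  rw [hden, h1a]
  by_cases hc : A * Lr + B * Sr = 0
  · have hBS : B * Sr = 0 := by
      have hg1 : 0 ≤ A * Lr := mul_nonneg hA0 hLr0
      have hg2 : 0 ≤ B * Sr := mul_nonneg hB0 hSr0
      linarith
    rw [hc, hBS, zero_div, zero_div, div_zero]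
  · field_simp
    try ring

end FinalAlgebra

end Stmt7Aux


open MeasureTheory

/-- For `0 ≤ l < n`, `ν`-a.e.
`ν(θ > n-l-1 | 𝓕_n) = (1 - Π_{n-l-1}) (∑_{k=0}^{l} p^{l-k} q L_{k+1} + p^{l+1} L₀) / G_{l+1}`,
the `L`'s and `G_{l+1}` evaluated at `(X_{n-l-1}, …, X_n)` and `α = Π_{n-l-1}`,
where `Π_m = ν(θ ≤ m | 𝓕_m)`. -/
theorem stmt7 {E : Type*} [MeasurableSpace E] (μ : Measure E) [SigmaFinite μ]
    (f0 f1 : E → E → ℝ≥0) (hf0 : Measurable (Function.uncurry f0))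
    (hf1 : Measurable (Function.uncurry f1))
    (hi0 : ∀ z, ∫⁻ y, (f0 z y : ℝ≥0∞) ∂μ = 1) (hi1 : ∀ z, ∫⁻ y, (f1 z y : ℝ≥0∞) ∂μ = 1)
    (p π : ℝ) (hp : p ∈ Set.Ioo (0 : ℝ) 1) (hπ : π ∈ Set.Ioo (0 : ℝ) 1)
    (x : E) (n l : ℕ) (hn : 1 ≤ n) (hl : l < n) :
    ∀ᵐ ω ∂(nuMeasure μ f0 f1 p π x n),
      ((nuMeasure μ f0 f1 p π x n)[Set.indicator {ω' : ℕ × (Fin n → E) | n - l - 1 < ω'.1}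
          (fun _ => (1 : ℝ)) | Ffil n n le_rfl]) ω =
        (1 - ((nuMeasure μ f0 f1 p π x n)[Set.indicator {ω' : ℕ × (Fin n → E) | ω'.1 ≤ n - l - 1}
            (fun _ => (1 : ℝ)) | Ffil n (n - l - 1) (by omega)]) ω) *
          ((∑ k ∈ Finset.range (l + 1),
              p ^ (l - k) * (1 - p) * (Lfn f0 f1 (n - l - 1) n (k + 1) (extvec n x ω.2) : ℝ)) +
            p ^ (l + 1) * (Lfn f0 f1 (n - l - 1) n 0 (extvec n x ω.2) : ℝ)) /
          Gfn f0 f1 p (n - l - 1) l (extvec n x ω.2)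
            (((nuMeasure μ f0 f1 p π x n)[Set.indicator {ω' : ℕ × (Fin n → E) | ω'.1 ≤ n - l - 1}
              (fun _ => (1 : ℝ)) | Ffil n (n - l - 1) (by omega)]) ω) := by
  classical
  have hm₀n : n - l - 1 ≤ n := by omega
  have hn' : n = (n - l - 1) + l + 1 := by omega
  have h1 := Stmt7Aux.condexp_eq_ratio μ f0 f1 x p π hf0 hf1 hi0 hi1 hp hπ n n le_rfl
    {j | n - l - 1 < j}
  have h2 := Stmt7Aux.condexp_eq_ratio μ f0 f1 x p π hf0 hf1 hi0 hi1 hp hπ n (n - l - 1) hm₀n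
    {j | j ≤ n - l - 1}
  have hgood := Stmt7Aux.ae_DT_good μ f0 f1 x p π hf0 hf1 hi0 hi1 hp hπ n (n - l - 1) hm₀n
  have e1 : {ω' : ℕ × (Fin n → E) | ω'.1 ∈ {j | n - l - 1 < j}}
      = {ω' : ℕ × (Fin n → E) | n - l - 1 < ω'.1} := rfl
  have e2 : {ω' : ℕ × (Fin n → E) | ω'.1 ∈ {j | j ≤ n - l - 1}}
      = {ω' : ℕ × (Fin n → E) | ω'.1 ≤ n - l - 1} := rfl
  rw [e1] at h1
  rw [e2] at h2
  filter_upwards [h1, h2, hgood] with ω hr1 hr2 hgd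
  show ((nuMeasure μ f0 f1 p π x n)[Set.indicator {ω' : ℕ × (Fin n → E) | n - l - 1 < ω'.1}
          (fun _ => (1 : ℝ)) | Ffil n n le_rfl]) ω =
        (1 - ((nuMeasure μ f0 f1 p π x n)[Set.indicator {ω' : ℕ × (Fin n → E) | ω'.1 ≤ n - l - 1}
            (fun _ => (1 : ℝ)) | Ffil n (n - l - 1) hm₀n]) ω) *
          ((∑ k ∈ Finset.range (l + 1),
              p ^ (l - k) * (1 - p) * (Lfn f0 f1 (n - l - 1) n (k + 1) (extvec n x ω.2) : ℝ)) +
            p ^ (l + 1) * (Lfn f0 f1 (n - l - 1) n 0 (extvec n x ω.2) : ℝ)) /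
          Gfn f0 f1 p (n - l - 1) l (extvec n x ω.2)
            (((nuMeasure μ f0 f1 p π x n)[Set.indicator {ω' : ℕ × (Fin n → E) | ω'.1 ≤ n - l - 1}
              (fun _ => (1 : ℝ)) | Ffil n (n - l - 1) hm₀n]) ω)
  rw [← hr1, ← hr2]
  simp only [Stmt7Aux.resv_self]
  obtain ⟨hd0, hdtop⟩ := hgd
  set y := Stmt7Aux.resv n (n - l - 1) hm₀n ω.2 with hy
  set xv := extvec n x ω.2 with hxv
  have hd : Stmt7Aux.DT p π f0 f1 x (n - l - 1) Set.univ y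
      = Stmt7Aux.DT p π f0 f1 x (n - l - 1) {j | j ≤ n - l - 1} y
        + ENNReal.ofReal ((1 - π) * p ^ (n - l - 1))
            * Stmt7Aux.dens f0 f1 x (n - l - 1) ((n - l - 1) + 1) y :=
    Stmt7Aux.DT_univ_split_level f0 f1 x p π hp hπ (n - l - 1) y
  set a := Stmt7Aux.DT p π f0 f1 x (n - l - 1) {j | j ≤ n - l - 1} y with ha
  set b := ENNReal.ofReal ((1 - π) * p ^ (n - l - 1))
      * Stmt7Aux.dens f0 f1 x (n - l - 1) ((n - l - 1) + 1) y with hb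
  have hnum : Stmt7Aux.DT p π f0 f1 x n {j | n - l - 1 < j} ω.2
      = b * ((∑ k ∈ Finset.range (l + 1), ENNReal.ofReal (p ^ (l - k) * (1 - p))
            * ((Lfn f0 f1 (n - l - 1) n (k + 1) xv : ℝ≥0) : ℝ≥0∞))
          + ENNReal.ofReal (p ^ (l + 1)) * ((Lfn f0 f1 (n - l - 1) n 0 xv : ℝ≥0) : ℝ≥0∞)) :=
    Stmt7Aux.DT_gt_eq f0 f1 x p π hp hπ hn' hm₀n ω.2
  have hdle : Stmt7Aux.DT p π f0 f1 x n {j | j ≤ n - l - 1} ω.2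
      = a * ((Lfn f0 f1 (n - l - 1) n (l + 1) xv : ℝ≥0) : ℝ≥0∞) :=
    Stmt7Aux.DT_le_split f0 f1 x p π hn' hm₀n ω.2
  have hdn : Stmt7Aux.DT p π f0 f1 x n Set.univ ω.2
      = a * ((Lfn f0 f1 (n - l - 1) n (l + 1) xv : ℝ≥0) : ℝ≥0∞)
        + b * ((∑ k ∈ Finset.range (l + 1), ENNReal.ofReal (p ^ (l - k) * (1 - p))
              * ((Lfn f0 f1 (n - l - 1) n (k + 1) xv : ℝ≥0) : ℝ≥0∞))
            + ENNReal.ofReal (p ^ (l + 1)) * ((Lfn f0 f1 (n - l - 1) n 0 xv : ℝ≥0) : ℝ≥0∞)) := by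
    rw [Stmt7Aux.DT_split_le_gt f0 f1 x p π n (n - l - 1) ω.2, hdle, hnum]
  rw [hd, hnum, hdn]
  rw [hd] at hd0 hdtop
  obtain ⟨hatop, hbtop⟩ := ENNReal.add_ne_top.mp hdtop
  have hsum_top : (∑ k ∈ Finset.range (l + 1), ENNReal.ofReal (p ^ (l - k) * (1 - p))
      * ((Lfn f0 f1 (n - l - 1) n (k + 1) xv : ℝ≥0) : ℝ≥0∞)) ≠ ∞ := by
    refine (ENNReal.sum_lt_top.mpr fun k _ => ?_).ne
    exact ENNReal.mul_lt_top ENNReal.ofReal_lt_top ENNReal.coe_lt_top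
  have hStop : ((∑ k ∈ Finset.range (l + 1), ENNReal.ofReal (p ^ (l - k) * (1 - p))
      * ((Lfn f0 f1 (n - l - 1) n (k + 1) xv : ℝ≥0) : ℝ≥0∞))
      + ENNReal.ofReal (p ^ (l + 1)) * ((Lfn f0 f1 (n - l - 1) n 0 xv : ℝ≥0) : ℝ≥0∞)) ≠ ∞ :=
    ENNReal.add_ne_top.mpr ⟨hsum_top,
      (ENNReal.mul_lt_top ENNReal.ofReal_lt_top ENNReal.coe_lt_top).ne⟩
  have hSrEq : ((∑ k ∈ Finset.range (l + 1), ENNReal.ofReal (p ^ (l - k) * (1 - p))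
      * ((Lfn f0 f1 (n - l - 1) n (k + 1) xv : ℝ≥0) : ℝ≥0∞))
      + ENNReal.ofReal (p ^ (l + 1)) * ((Lfn f0 f1 (n - l - 1) n 0 xv : ℝ≥0) : ℝ≥0∞)).toReal
      = (∑ k ∈ Finset.range (l + 1),
          p ^ (l - k) * (1 - p) * ((Lfn f0 f1 (n - l - 1) n (k + 1) xv : ℝ≥0) : ℝ))
        + p ^ (l + 1) * ((Lfn f0 f1 (n - l - 1) n 0 xv : ℝ≥0) : ℝ) := by
    rw [ENNReal.toReal_add hsum_top
      (ENNReal.mul_lt_top ENNReal.ofReal_lt_top ENNReal.coe_lt_top).ne, ENNReal.toReal_mul,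
      ENNReal.toReal_ofReal (pow_nonneg hp.1.le _), ENNReal.coe_toReal]
    congr 1
    rw [ENNReal.toReal_sum (fun k _ =>
      ENNReal.mul_ne_top ENNReal.ofReal_ne_top ENNReal.coe_ne_top)]
    apply Finset.sum_congr rfl
    intro k _
    rw [ENNReal.toReal_mul, ENNReal.toReal_ofReal
      (mul_nonneg (pow_nonneg hp.1.le _) (by linarith [hp.2])), ENNReal.coe_toReal]
  have hGfn : Gfn f0 f1 p (n - l - 1) l xv ((a / (a + b)).toReal)
      = (a / (a + b)).toReal * (((Lfn f0 f1 (n - l - 1) n (l + 1) xv : ℝ≥0) : ℝ≥0∞)).toReal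
        + (1 - (a / (a + b)).toReal)
            * ((∑ k ∈ Finset.range (l + 1),
                p ^ (l - k) * (1 - p) * ((Lfn f0 f1 (n - l - 1) n (k + 1) xv : ℝ≥0) : ℝ))
              + p ^ (l + 1) * ((Lfn f0 f1 (n - l - 1) n 0 xv : ℝ≥0) : ℝ)) := by
    unfold Gfn
    rw [show n - l - 1 + l + 1 = n by omega, ENNReal.coe_toReal]
  exact Stmt7Aux.final_identity a b _ _ _ (Gfn f0 f1 p (n - l - 1) l xv)
    hatop hbtop ENNReal.coe_ne_top hStop hd0 hSrEq hGfn
end
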